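/- arXiv:1906.04523 — 7 statements merged into one kernel-verified Lean document; each statement's English description precedes it below -/
import Mathlib

section
/- For every integer k ≥ 1 and every n with n = 4k, n = 4k+1, n = 4k+2, or n = 4k+3, the minimum of the dominator chromatic number χ_d(D) over all orientations D of the path P_n equals k+2 if n = 4k, k+2 if n = 4k+1, k+3 if n = 4k+2, and k+3 if n = 4k+3, with the single exception n = 6, for which the minimum equals 3. -/
/-- A vertex `v` dominates the color class of color `a` under coloring `c`:
the class is nonempty and every vertex of that color is an out-neighbor of `v`. -/
def Dominates {V α : Type*} (A : V → V → Prop) (c : V → α) (v : V) (a : α) : Prop :=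
  (∃ w, c w = a) ∧ ∀ w, c w = a → A v w

/-- A dominator coloring of the digraph with arc relation `A`: a proper coloring
such that every vertex with positive out-degree dominates some color class. -/
def IsDominatorColoring {V α : Type*} (A : V → V → Prop) (c : V → α) : Prop :=
  (∀ u v, A u v → c u ≠ c v) ∧ ∀ v, (∃ w, A v w) → ∃ a, Dominates A c v a

/-- The dominator chromatic number: the least `k` admitting a dominator coloring
with colors in `Fin k`. -/
noncomputable def domChrom {V : Type*} (A : V → V → Prop) : ℕ :=
  sInf {k | ∃ c : V → Fin k, IsDominatorColoring A c}

/-- The arc relation of the orientation of the path `P_n` (vertices `0,…,n-1`)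
determined by `o`: the edge between `i` and `i+1` is directed `i → i+1`
when `o i = true` and `i+1 → i` when `o i = false`. -/
def pathArc (n : ℕ) (o : ℕ → Bool) (u v : Fin n) : Prop :=
  ((u : ℕ) + 1 = (v : ℕ) ∧ o u = true) ∨ ((v : ℕ) + 1 = (u : ℕ) ∧ o v = false)

/-- The minimum of the dominator chromatic number over all orientations of `P_n`. -/
noncomputable def minDomChromPath (n : ℕ) : ℕ :=
  sInf {m | ∃ o : ℕ → Bool, m = domChrom (pathArc n o)}

instance {n o} : DecidableRel (pathArc n o) := fun u v => by
  unfold pathArc; infer_instance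

instance {V α : Type*} [Fintype V] [DecidableEq α] (A : V → V → Prop) [DecidableRel A]
    (c : V → α) (v : V) (a : α) : Decidable (Dominates A c v a) := by
  unfold Dominates; infer_instance

instance {V α : Type*} [Fintype V] [Fintype α] [DecidableEq α] (A : V → V → Prop)
    [DecidableRel A] (c : V → α) : Decidable (IsDominatorColoring A c) := by
  unfold IsDominatorColoring; infer_instance

def oF (n : ℕ) (b : Fin n → Bool) : ℕ → Bool := fun i => if h : i < n then b ⟨i, h⟩ else false

lemma pathArc_oF (n : ℕ) (o : ℕ → Bool) :
    pathArc n o = pathArc n (oF n (fun i => o i)) := by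
  funext u v
  unfold pathArc oF
  simp [u.isLt, v.isLt]

lemma isDom_castLE {V : Type*} {A : V → V → Prop} {t t' : ℕ} (h : t ≤ t') {c : V → Fin t}
    (hc : IsDominatorColoring A c) :
    IsDominatorColoring A (fun v => Fin.castLE h (c v)) := by
  obtain ⟨hp, hd⟩ := hc
  constructor
  · intro u v huv hcc
    exact hp u v huv (by simpa [Fin.castLE_inj] using hcc)
  · intro v hv
    obtain ⟨a, ⟨w, hw⟩, hall⟩ := hd v hv
    exact ⟨Fin.castLE h a, ⟨w, by simp [hw]⟩,
      fun u hu => hall u (by simpa [Fin.castLE_inj] using hu)⟩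

set_option maxRecDepth 10000 in
lemma no4 : ∀ (b : Fin 4 → Bool) (c : Fin 4 → Fin 2),
    ¬ IsDominatorColoring (pathArc 4 (oF 4 b)) c := by decide

set_option maxRecDepth 100000 in
lemma evens7 : ∀ T : Finset (Fin 7), T.card = 4 →
    (∀ u ∈ T, ∀ v ∈ T, (u : ℕ) + 1 ≠ (v : ℕ)) →
    ∀ u : Fin 7, (u ∈ T ↔ (u : ℕ) % 2 = 0) := by decide

lemma exists_id_coloring (n : ℕ) (o : ℕ → Bool) :
    ∃ c : Fin n → Fin n, IsDominatorColoring (pathArc n o) c := by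
  refine ⟨fun v => v, ?_, ?_⟩
  · intro u v huv h
    have h2 : u = v := h
    rcases huv with ⟨h1, _⟩ | ⟨h1, _⟩ <;> (rw [h2] at h1; omega)
  · rintro v ⟨w, hw⟩
    exact ⟨w, ⟨w, rfl⟩, fun u hu => by rwa [show u = w from hu]⟩

lemma lower {n t : ℕ} (hn : 4 ≤ n) {o : ℕ → Bool} {c : Fin n → Fin t}
    (h : IsDominatorColoring (pathArc n o) c) :
    (if n = 6 then 3 else n / 4 + 2 + n % 4 / 2) ≤ t := by
  classical
  obtain ⟨hp, hdom⟩ := id h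
  have arc_cases : ∀ u v : Fin n, pathArc n o u v → (u:ℕ)+1 = (v:ℕ) ∨ (v:ℕ)+1 = (u:ℕ) :=
    fun u v hh => hh.elim (fun x => Or.inl x.1) (fun x => Or.inr x.1)
  have arc_of_adj : ∀ u v : Fin n, (u:ℕ)+1 = (v:ℕ) → pathArc n o u v ∨ pathArc n o v u := by
    intro u v huv
    cases ho : o (u:ℕ) with
    | true => exact Or.inl (Or.inl ⟨huv, ho⟩)
    | false => exact Or.inr (Or.inr ⟨huv, ho⟩)
  have nonadj_card : ∀ T : Finset (Fin n),
      (∀ u ∈ T, ∀ v ∈ T, (u:ℕ)+1 ≠ (v:ℕ)) → 2 * T.card ≤ n + 1 := by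
    intro T hT
    have hle : T.card ≤ (Finset.range ((n+1)/2)).card := by
      apply Finset.card_le_card_of_injOn (fun v : Fin n => (v:ℕ)/2)
      · intro a _
        simp only [Finset.mem_coe, Finset.mem_range]
        have := a.isLt; omega
      · intro a ha b hb hab
        by_contra hne
        have hv : (a:ℕ) ≠ (b:ℕ) := fun hh => hne (Fin.ext hh)
        simp only at hab
        have : (a:ℕ)+1 = (b:ℕ) ∨ (b:ℕ)+1 = (a:ℕ) := by omega
        rcases this with hh | hh
        · exact hT a ha b hb hh
        · exact hT b hb a ha hh
    rw [Finset.card_range] at hle; omega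
  set S := Finset.univ.filter (fun v : Fin n => ∀ w, ¬ pathArc n o v w) with hS_def
  have S_nonadj : ∀ u ∈ S, ∀ v ∈ S, (u:ℕ)+1 ≠ (v:ℕ) := by
    intro u hu v hv hadj
    rw [hS_def, Finset.mem_filter] at hu hv
    rcases arc_of_adj u v hadj with hh | hh
    · exact hu.2 v hh
    · exact hv.2 u hh
  have hS : 2 * S.card ≤ n + 1 := nonadj_card S S_nonadj
  set Cls := fun a : Fin t => Finset.univ.filter (fun w => c w = a) with hCls_def
  have mem_Cls : ∀ (a : Fin t) (w : Fin n), w ∈ Cls a ↔ c w = a := by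
    intro a w; rw [hCls_def]; simp
  have class_nonadj : ∀ a : Fin t, ∀ u ∈ Cls a, ∀ v ∈ Cls a, (u:ℕ)+1 ≠ (v:ℕ) := by
    intro a u hu v hv hadj
    rw [mem_Cls] at hu hv
    rcases arc_of_adj u v hadj with hh | hh
    · exact hp u v hh (hu.trans hv.symm)
    · exact hp v u hh (hv.trans hu.symm)
  have class_bound : ∀ a : Fin t, 2 * (Cls a).card ≤ n + 1 :=
    fun a => nonadj_card _ (class_nonadj a)
  have two_bound : ∀ (T : Finset (Fin n)) (x : Fin n),
      (∀ y ∈ T, (y:ℕ)+1 = (x:ℕ) ∨ (x:ℕ)+1 = (y:ℕ)) → T.card ≤ 2 := by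
    intro T x hT
    have hle : T.card ≤ (Finset.range 2).card := by
      apply Finset.card_le_card_of_injOn (fun y : Fin n => if (y:ℕ)+1 = (x:ℕ) then 0 else 1)
      · intro a _; simp only [Finset.mem_coe, Finset.mem_range]; split <;> omega
      · intro a ha b hb hab
        have h1 := hT a ha
        have h2 := hT b hb
        apply Fin.ext
        simp only at hab
        split_ifs at hab <;> omega
    simpa using hle
  set D := Finset.univ.filter (fun a : Fin t => ∃ v, Dominates (pathArc n o) c v a) with hD_def
  have mem_D : ∀ a, a ∈ D ↔ ∃ v, Dominates (pathArc n o) c v a := by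
    intro a; rw [hD_def]; simp
  have class_card : ∀ a ∈ D, 1 ≤ (Cls a).card ∧ (Cls a).card ≤ 2 := by
    intro a ha
    rw [mem_D] at ha
    obtain ⟨v, ⟨w, hw⟩, hall⟩ := ha
    constructor
    · exact Finset.card_pos.2 ⟨w, (mem_Cls a w).2 hw⟩
    · apply two_bound _ v
      intro y hy
      exact (arc_cases v y (hall y ((mem_Cls a y).1 hy))).symm
  set dms := fun a : Fin t => Finset.univ.filter (fun v => Dominates (pathArc n o) c v a)
    with hdms_def
  have mem_dms : ∀ (a : Fin t) (v : Fin n), v ∈ dms a ↔ Dominates (pathArc n o) c v a := by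
    intro a v; rw [hdms_def]; simp
  have dms_bound1 : ∀ a, (Cls a).card = 1 → (dms a).card ≤ 2 := by
    intro a h1
    obtain ⟨w, hw⟩ := Finset.card_eq_one.1 h1
    have hcw : c w = a := (mem_Cls a w).1 (hw ▸ Finset.mem_singleton_self w)
    apply two_bound _ w
    intro v hv
    rw [mem_dms] at hv
    exact arc_cases v w (hv.2 w hcw)
  have dms_bound2 : ∀ a, (Cls a).card = 2 → (dms a).card ≤ 1 := by
    intro a h2
    obtain ⟨w1, w2, hne, hw⟩ := Finset.card_eq_two.1 h2
    have hcw1 : c w1 = a := (mem_Cls a w1).1 (by rw [hw]; simp)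
    have hcw2 : c w2 = a := (mem_Cls a w2).1 (by rw [hw]; simp)
    have hvne : (w1:ℕ) ≠ (w2:ℕ) := fun hh => hne (Fin.ext hh)
    rw [Finset.card_le_one]
    intro v hv v' hv'
    rw [mem_dms] at hv hv'
    have a1 := arc_cases v w1 (hv.2 w1 hcw1)
    have a2 := arc_cases v w2 (hv.2 w2 hcw2)
    have a3 := arc_cases v' w1 (hv'.2 w1 hcw1)
    have a4 := arc_cases v' w2 (hv'.2 w2 hcw2)
    apply Fin.ext
    rcases a1 with a1 | a1 <;> rcases a2 with a2 | a2 <;> rcases a3 with a3 | a3 <;>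
      rcases a4 with a4 | a4 <;> omega
  set D1 := D.filter (fun a => (Cls a).card = 1) with hD1_def
  set D2 := D.filter (fun a => ¬ (Cls a).card = 1) with hD2_def
  have hD2_class : ∀ a ∈ D2, (Cls a).card = 2 := by
    intro a ha
    rw [hD2_def, Finset.mem_filter] at ha
    have := class_card a ha.1
    omega
  have hD12 : D1.card + D2.card = D.card := Finset.card_filter_add_card_filter_not _
  have key : n ≤ S.card + (2 * D1.card + D2.card) := by
    have hsub : Finset.univ \ S ⊆ D.biUnion dms := by
      intro v hv
      rw [Finset.mem_sdiff, hS_def, Finset.mem_filter] at hv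
      have hex : ∃ w, pathArc n o v w := by
        by_contra hc2
        push_neg at hc2
        exact hv.2 ⟨Finset.mem_univ v, hc2⟩
      obtain ⟨a, ha⟩ := hdom v hex
      exact Finset.mem_biUnion.2 ⟨a, (mem_D a).2 ⟨v, ha⟩, (mem_dms a v).2 ha⟩
    have h1 : (Finset.univ \ S).card ≤ ∑ a ∈ D, (dms a).card :=
      le_trans (Finset.card_le_card hsub) Finset.card_biUnion_le
    have h2 : ∑ a ∈ D, (dms a).card ≤ 2 * D1.card + D2.card := by
      have hsplitD : ∑ a ∈ D, (dms a).card
          = ∑ a ∈ D1, (dms a).card + ∑ a ∈ D2, (dms a).card := by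
        rw [hD1_def, hD2_def]
        exact (Finset.sum_filter_add_sum_filter_not D _ _).symm
      have e1 : ∑ a ∈ D1, (dms a).card ≤ 2 * D1.card := by
        calc ∑ a ∈ D1, (dms a).card ≤ ∑ _a ∈ D1, 2 :=
              Finset.sum_le_sum (fun a ha => dms_bound1 a (Finset.mem_filter.1 ha).2)
          _ = 2 * D1.card := by rw [Finset.sum_const, smul_eq_mul]; ring
      have e2 : ∑ a ∈ D2, (dms a).card ≤ D2.card := by
        calc ∑ a ∈ D2, (dms a).card ≤ ∑ _a ∈ D2, 1 :=
              Finset.sum_le_sum (fun a ha => dms_bound2 a (hD2_class a ha))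
          _ = D2.card := by rw [Finset.sum_const, smul_eq_mul]; ring
      omega
    have h3 : (Finset.univ \ S).card = n - S.card := by
      rw [Finset.card_sdiff_of_subset (Finset.subset_univ S)]; simp
    have h4 : S.card ≤ n := le_trans (Finset.card_le_univ S) (by simp)
    omega
  have hsum_univ : ∑ a : Fin t, (Cls a).card = n := by
    have h0 : (Finset.univ : Finset (Fin n)).card = ∑ a : Fin t, (Cls a).card :=
      Finset.card_eq_sum_card_fiberwise (fun x _ => Finset.mem_univ (c x))
    simpa using h0.symm
  have hDt : D.card ≤ t := le_trans (Finset.card_le_univ D) (by simp)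
  have hsum_D : ∑ a ∈ D, (Cls a).card = D1.card + 2 * D2.card := by
    have hsplitC : ∑ a ∈ D, (Cls a).card
        = ∑ a ∈ D1, (Cls a).card + ∑ a ∈ D2, (Cls a).card := by
      rw [hD1_def, hD2_def]
      exact (Finset.sum_filter_add_sum_filter_not D _ _).symm
    have e1 : ∑ a ∈ D1, (Cls a).card = D1.card := by
      rw [Finset.sum_congr rfl (fun a ha => (Finset.mem_filter.1 ha).2)]
      simp [hD1_def]
    have e2 : ∑ a ∈ D2, (Cls a).card = 2 * D2.card := by
      rw [Finset.sum_congr rfl (fun a ha => hD2_class a ha)]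
      rw [Finset.sum_const, smul_eq_mul]; ring
    omega
  have tri : t = D.card ∨ t = D.card + 1 ∨ D.card + 2 ≤ t := by omega
  rcases tri with ht | ht | ht
  · -- every color is dominated
    have hDuniv : D = Finset.univ := Finset.eq_univ_of_card D (by simp [← ht])
    have hcov : n = D1.card + 2 * D2.card := by
      rw [← hsum_D, hDuniv]
      exact hsum_univ.symm
    by_cases h4 : n = 4
    · subst h4
      rw [if_neg (by omega)]
      by_contra hlt
      push_neg at hlt
      have ht2 : t ≤ 2 := by omega
      have hcast := isDom_castLE ht2 h
      rw [pathArc_oF] at hcast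
      exact no4 _ _ hcast
    · split_ifs with h6 <;> omega
  · -- exactly one undominated color
    have hcompl : (Finset.univ \ D).card = 1 := by
      rw [Finset.card_sdiff_of_subset (Finset.subset_univ D)]
      simp [ht]
    obtain ⟨x, hx⟩ := Finset.card_eq_one.1 hcompl
    have hxD : x ∉ D := by
      have hmem : x ∈ Finset.univ \ D := hx ▸ Finset.mem_singleton_self x
      exact (Finset.mem_sdiff.1 hmem).2
    have hsplit : ∑ a ∈ Finset.univ \ D, (Cls a).card + ∑ a ∈ D, (Cls a).card = n := by
      rw [Finset.sum_sdiff (Finset.subset_univ D)]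
      simpa using hsum_univ
    have hxcls : ∑ a ∈ Finset.univ \ D, (Cls a).card = (Cls x).card := by
      rw [hx, Finset.sum_singleton]
    have hcov : n = D1.card + 2 * D2.card + (Cls x).card := by omega
    have hr := class_bound x
    by_cases h7 : n = 7
    · subst h7
      rw [if_neg (by omega)]
      by_contra hlt
      push_neg at hlt
      have hcfg : D1.card = 1 ∧ D2.card = 1 ∧ (Cls x).card = 4 ∧ S.card = 4 := by omega
      obtain ⟨b, hb⟩ := Finset.card_eq_one.1 hcfg.2.1
      have hbD2 : b ∈ D2 := hb ▸ Finset.mem_singleton_self b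
      have hbD : b ∈ D := (Finset.mem_filter.1 hbD2).1
      have hb2 : (Cls b).card = 2 := hD2_class b hbD2
      obtain ⟨v, hv⟩ := (mem_D b).1 hbD
      obtain ⟨w1, w2, hne, hw⟩ := Finset.card_eq_two.1 hb2
      have hcw1 : c w1 = b := (mem_Cls b w1).1 (by rw [hw]; simp)
      have hSe := evens7 S hcfg.2.2.2 S_nonadj
      have hXe := evens7 (Cls x) hcfg.2.2.1 (class_nonadj x)
      have hbx : b ≠ x := fun hh => hxD (hh ▸ hbD)
      have hw1x : w1 ∉ Cls x := fun hh => hbx (hcw1 ▸ (mem_Cls x w1).1 hh)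
      have hw1odd : (w1:ℕ) % 2 = 1 := by
        have hno : ¬ ((w1:ℕ) % 2 = 0) := fun hh => hw1x ((hXe w1).2 hh)
        omega
      have harc1 := arc_cases v w1 (hv.2 w1 hcw1)
      have hveven : (v:ℕ) % 2 = 0 := by omega
      have hvS : v ∈ S := (hSe v).2 hveven
      rw [hS_def, Finset.mem_filter] at hvS
      exact hvS.2 w1 (hv.2 w1 hcw1)
    · split_ifs with h6 <;> omega
  · split_ifs with h6 <;> omega

def oAlt : ℕ → Bool := fun i => decide (i % 2 = 1)

lemma upper1 (n : ℕ) (hn : 4 ≤ n) (h2 : n % 4 ≠ 2) :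
    ∃ c : Fin n → Fin ((n+2)/4 + 2), IsDominatorColoring (pathArc n oAlt) c := by
  have hbound : ∀ v : Fin n,
      (if (v:ℕ) % 2 = 1 then 0 else if (v:ℕ) % 4 = 0 then 1 else (v:ℕ)/4 + 2) < (n+2)/4 + 2 := by
    intro v
    have := v.isLt
    split_ifs <;> omega
  refine ⟨fun v => ⟨_, hbound v⟩, ?_, ?_⟩
  · intro u v huv hc
    have hc' : (if (u:ℕ) % 2 = 1 then 0 else if (u:ℕ) % 4 = 0 then 1 else (u:ℕ)/4 + 2)
        = (if (v:ℕ) % 2 = 1 then 0 else if (v:ℕ) % 4 = 0 then 1 else (v:ℕ)/4 + 2) :=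
      congrArg Fin.val hc
    have hpar : ((u:ℕ)+1 = (v:ℕ) ∧ (u:ℕ) % 2 = 1) ∨ ((v:ℕ)+1 = (u:ℕ) ∧ (v:ℕ) % 2 = 0) := by
      rcases huv with ⟨h1, ho⟩ | ⟨h1, ho⟩
      · left; refine ⟨h1, ?_⟩
        simpa [oAlt] using ho
      · right; refine ⟨h1, ?_⟩
        simp only [oAlt, decide_eq_false_iff_not] at ho
        omega
    split_ifs at hc' <;> omega
  · intro v hv
    have hv1 : (v:ℕ) % 2 = 1 := by
      obtain ⟨w, hw⟩ := hv
      rcases hw with ⟨h1, ho⟩ | ⟨h1, ho⟩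
      · simpa [oAlt] using ho
      · simp only [oAlt, decide_eq_false_iff_not] at ho
        omega
    have hvlt := v.isLt
    set wn : ℕ := if (v:ℕ) % 4 = 1 then (v:ℕ)+1 else (v:ℕ)-1 with hwn_def
    have hwn : wn < n ∧ wn % 4 = 2 := by
      rw [hwn_def]; split_ifs <;> omega
    refine ⟨_, ⟨⟨wn, hwn.1⟩, rfl⟩, ?_⟩
    intro u hu
    have hval : (if (u:ℕ) % 2 = 1 then 0 else if (u:ℕ) % 4 = 0 then 1 else (u:ℕ)/4 + 2)
        = (if wn % 2 = 1 then 0 else if wn % 4 = 0 then 1 else wn/4 + 2) := congrArg Fin.val hu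
    have hueq : (u:ℕ) = wn := by
      have hu4 := hwn.2
      split_ifs at hval <;> omega
    by_cases hv4 : (v:ℕ) % 4 = 1
    · refine Or.inl ⟨?_, ?_⟩
      · rw [hwn_def, if_pos hv4] at hueq; omega
      · simp [oAlt, hv1]
    · refine Or.inr ⟨?_, ?_⟩
      · rw [hwn_def, if_neg hv4] at hueq; omega
      · simp only [oAlt, decide_eq_false_iff_not]
        rw [hwn_def, if_neg hv4] at hueq
        omega

lemma upper2 (n : ℕ) (hn : 6 ≤ n) (h2 : n % 4 = 2) :
    ∃ c : Fin n → Fin (n/4 + 3), IsDominatorColoring (pathArc n oAlt) c := by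
  have hbound : ∀ v : Fin n,
      (if (v:ℕ) % 2 = 1 then 0 else if (v:ℕ)+2 = n then n/4+2
        else if (v:ℕ) % 4 = 0 then 1 else (v:ℕ)/4 + 2) < n/4 + 3 := by
    intro v
    have := v.isLt
    split_ifs <;> omega
  refine ⟨fun v => ⟨_, hbound v⟩, ?_, ?_⟩
  · intro u v huv hc
    have hc' : (if (u:ℕ) % 2 = 1 then 0 else if (u:ℕ)+2 = n then n/4+2
          else if (u:ℕ) % 4 = 0 then 1 else (u:ℕ)/4 + 2)
        = (if (v:ℕ) % 2 = 1 then 0 else if (v:ℕ)+2 = n then n/4+2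
          else if (v:ℕ) % 4 = 0 then 1 else (v:ℕ)/4 + 2) :=
      congrArg Fin.val hc
    have hpar : ((u:ℕ)+1 = (v:ℕ) ∧ (u:ℕ) % 2 = 1) ∨ ((v:ℕ)+1 = (u:ℕ) ∧ (v:ℕ) % 2 = 0) := by
      rcases huv with ⟨h1, ho⟩ | ⟨h1, ho⟩
      · left; refine ⟨h1, ?_⟩
        simpa [oAlt] using ho
      · right; refine ⟨h1, ?_⟩
        simp only [oAlt, decide_eq_false_iff_not] at ho
        omega
    split_ifs at hc' <;> omega
  · intro v hv
    have hv1 : (v:ℕ) % 2 = 1 := by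
      obtain ⟨w, hw⟩ := hv
      rcases hw with ⟨h1, ho⟩ | ⟨h1, ho⟩
      · simpa [oAlt] using ho
      · simp only [oAlt, decide_eq_false_iff_not] at ho
        omega
    have hvlt := v.isLt
    set wn : ℕ := if (v:ℕ)+1 = n then (v:ℕ)-1
      else if (v:ℕ) % 4 = 1 then (v:ℕ)+1 else (v:ℕ)-1 with hwn_def
    have hwn : wn < n ∧ wn % 2 = 0 ∧
        (((v:ℕ)+1 = n ∧ wn+2 = n) ∨ ((v:ℕ)+1 ≠ n ∧ wn % 4 = 2 ∧ wn+2 ≠ n)) := by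
      rw [hwn_def]; split_ifs <;> omega
    refine ⟨_, ⟨⟨wn, hwn.1⟩, rfl⟩, ?_⟩
    intro u hu
    have hval : (if (u:ℕ) % 2 = 1 then 0 else if (u:ℕ)+2 = n then n/4+2
          else if (u:ℕ) % 4 = 0 then 1 else (u:ℕ)/4 + 2)
        = (if wn % 2 = 1 then 0 else if wn+2 = n then n/4+2
          else if wn % 4 = 0 then 1 else wn/4 + 2) := congrArg Fin.val hu
    have hult := u.isLt
    have hueq : (u:ℕ) = wn := by
      rcases hwn.2.2 with ⟨hc1, hc2⟩ | ⟨hc1, hc2, hc3⟩ <;>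
        (split_ifs at hval <;> omega)
    by_cases hvn : (v:ℕ)+1 = n
    · refine Or.inr ⟨?_, ?_⟩
      · rw [hwn_def, if_pos hvn] at hueq; omega
      · simp only [oAlt, decide_eq_false_iff_not]
        have := hwn.2.1
        omega
    · by_cases hv4 : (v:ℕ) % 4 = 1
      · refine Or.inl ⟨?_, ?_⟩
        · rw [hwn_def, if_neg hvn, if_pos hv4] at hueq; omega
        · simp [oAlt, hv1]
      · refine Or.inr ⟨?_, ?_⟩
        · rw [hwn_def, if_neg hvn, if_neg hv4] at hueq; omega
        · simp only [oAlt, decide_eq_false_iff_not]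
          have := hwn.2.1
          omega

def o6 : ℕ → Bool := fun i => decide (i % 2 = 0)

set_option maxRecDepth 10000 in
lemma upper6 : ∃ c : Fin 6 → Fin 3, IsDominatorColoring (pathArc 6 o6) c :=
  ⟨![0, 1, 0, 2, 0, 2], by decide⟩

lemma minDom_eq (n G : ℕ) (hn : 4 ≤ n)
    (hup : ∃ (o : ℕ → Bool) (c : Fin n → Fin G), IsDominatorColoring (pathArc n o) c)
    (hlow : (if n = 6 then 3 else n / 4 + 2 + n % 4 / 2) = G) :
    minDomChromPath n = G := by
  obtain ⟨o₀, c₀, hc₀⟩ := hup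
  have hge : ∀ o : ℕ → Bool, G ≤ domChrom (pathArc n o) := by
    intro o
    unfold domChrom
    apply le_csInf ⟨n, Set.mem_setOf.mpr (exists_id_coloring n o)⟩
    rintro b ⟨cb, hcb⟩
    rw [← hlow]
    exact lower hn hcb
  have hle : domChrom (pathArc n o₀) ≤ G := by
    unfold domChrom
    exact Nat.sInf_le (Set.mem_setOf.mpr ⟨c₀, hc₀⟩)
  unfold minDomChromPath
  apply le_antisymm
  · exact Nat.sInf_le (Set.mem_setOf.mpr ⟨o₀, (le_antisymm hle (hge o₀)).symm⟩)
  · apply le_csInf ⟨_, Set.mem_setOf.mpr ⟨o₀, rfl⟩⟩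
    rintro m ⟨o, rfl⟩
    exact hge o

theorem min_domChrom_orientations_of_path (k n : ℕ) (hk : 1 ≤ k)
    (hn : n = 4 * k ∨ n = 4 * k + 1 ∨ n = 4 * k + 2 ∨ n = 4 * k + 3) :
    minDomChromPath n =
      if n = 6 then 3
      else if n = 4 * k ∨ n = 4 * k + 1 then k + 2
      else k + 3 := by
  rcases hn with h | h | h | h <;> subst h
  · rw [if_neg (by omega), if_pos (Or.inl rfl)]
    refine minDom_eq _ _ (by omega) ?_ (by rw [if_neg (by omega)]; omega)
    obtain ⟨c, hc⟩ := upper1 (4*k) (by omega) (by omega)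
    exact ⟨oAlt, _, isDom_castLE (show (4*k+2)/4+2 ≤ k+2 by omega) hc⟩
  · rw [if_neg (by omega), if_pos (Or.inr rfl)]
    refine minDom_eq _ _ (by omega) ?_ (by rw [if_neg (by omega)]; omega)
    obtain ⟨c, hc⟩ := upper1 (4*k+1) (by omega) (by omega)
    exact ⟨oAlt, _, isDom_castLE (show (4*k+1+2)/4+2 ≤ k+2 by omega) hc⟩
  · by_cases hk1 : k = 1
    · subst hk1
      rw [if_pos rfl]
      exact minDom_eq _ _ (by omega) ⟨o6, upper6⟩ (by norm_num)
    · rw [if_neg (by omega), if_neg (by omega)]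
      refine minDom_eq _ _ (by omega) ?_ (by rw [if_neg (by omega)]; omega)
      obtain ⟨c, hc⟩ := upper2 (4*k+2) (by omega) (by omega)
      exact ⟨oAlt, _, isDom_castLE (show (4*k+2)/4+3 ≤ k+3 by omega) hc⟩
  · rw [if_neg (by omega), if_neg (by omega)]
    refine minDom_eq _ _ (by omega) ?_ (by rw [if_neg (by omega)]; omega)
    obtain ⟨c, hc⟩ := upper1 (4*k+3) (by omega) (by omega)
    exact ⟨oAlt, _, isDom_castLE (show (4*k+3+2)/4+2 ≤ k+3 by omega) hc⟩
end

section
/- For every integer k ≥ 1, the minimum of the dominator chromatic number χ_d(D) over all orientations D of the path P_{4k} equals k+2. -/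
lemma aux4 (b : Fin 4 → Bool) (c : Fin 4 → Fin 2) :
    ¬ IsDominatorColoring
      (fun u v : Fin 4 => ((u:ℕ)+1 = (v:ℕ) ∧ b u = true) ∨ ((v:ℕ)+1 = (u:ℕ) ∧ b v = false)) c := by
  revert c b
  unfold IsDominatorColoring Dominates
  beta_reduce
  decide

lemma card_le_two_vals {α : Type*} (s : Finset α) (f : α → ℕ) (x y : ℕ)
    (hinj : ∀ a ∈ s, ∀ b ∈ s, f a = f b → a = b)
    (hv : ∀ a ∈ s, f a = x ∨ f a = y) : s.card ≤ 2 := by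
  by_contra hc
  push_neg at hc
  rw [Finset.two_lt_card] at hc
  obtain ⟨a, ha, b, hb, c, hc', hab, hac, hbc⟩ := hc
  have h1 := hv a ha
  have h2 := hv b hb
  have h3 := hv c hc'
  have g1 : f a ≠ f b := fun he => hab (hinj a ha b hb he)
  have g2 : f a ≠ f c := fun he => hac (hinj a ha c hc' he)
  have g3 : f b ≠ f c := fun he => hbc (hinj b hb c hc' he)
  omega

private lemma lower_bound (k : ℕ) (hk : 1 ≤ k) (o : ℕ → Bool) (m : ℕ) (c : Fin (4*k) → Fin m)
    (h : IsDominatorColoring (pathArc (4*k) o) c) : k + 2 ≤ m := by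
  classical
  by_contra hmlt
  push_neg at hmlt
  obtain ⟨hp, hd⟩ := h
  have hadj : ∀ u v : Fin (4*k), pathArc (4*k) o u v → ((u:ℕ)+1 = (v:ℕ) ∨ (v:ℕ)+1 = (u:ℕ)) := by
    rintro u v (⟨h1, _⟩ | ⟨h1, _⟩)
    · exact Or.inl h1
    · exact Or.inr h1
  have hcons : ∀ u v : Fin (4*k), (u:ℕ)+1 = (v:ℕ) → c u ≠ c v := by
    intro u v huv
    cases hb : o (u : ℕ) with
    | true => exact hp u v (Or.inl ⟨huv, hb⟩)
    | false => exact (hp v u (Or.inr ⟨huv, hb⟩)).symm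
  set T : Finset (Fin (4*k)) := Finset.univ.filter (fun v => ∃ w, pathArc (4*k) o v w) with hTdef
  -- Step 1 : 2*k ≤ T.card
  set tl : ℕ → ℕ := fun i => if o i then i else i + 1 with htl
  have himg : (Finset.range (4*k-1)).image tl ⊆ T.image Fin.val := by
    intro j hj
    simp only [Finset.mem_image, Finset.mem_range] at hj
    obtain ⟨i, hi, rfl⟩ := hj
    by_cases hb : o i
    · refine Finset.mem_image.2 ⟨⟨i, by omega⟩, ?_, by simp [htl, hb]⟩
      exact Finset.mem_filter.2 ⟨Finset.mem_univ _, ⟨⟨i+1, by omega⟩, Or.inl ⟨rfl, hb⟩⟩⟩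
    · refine Finset.mem_image.2 ⟨⟨i+1, by omega⟩, ?_, by simp [htl, hb]⟩
      refine Finset.mem_filter.2 ⟨Finset.mem_univ _, ⟨⟨i, by omega⟩, Or.inr ⟨rfl, ?_⟩⟩⟩
      simpa using hb
  have h1 : (Finset.range (4*k-1)).card ≤ 2 * ((Finset.range (4*k-1)).image tl).card := by
    apply Finset.card_le_mul_card_image
    intro a _
    apply card_le_two_vals _ id a (a-1)
    · intro x _ y _ he; exact he
    · intro i hi
      obtain ⟨-, hia⟩ := Finset.mem_filter.1 hi
      simp only [htl] at hia
      by_cases hb : o i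
      · rw [if_pos hb] at hia; simp only [id_eq]; omega
      · rw [if_neg hb] at hia; simp only [id_eq]; omega
  have h2 : ((Finset.range (4*k-1)).image tl).card ≤ (T.image Fin.val).card :=
    Finset.card_le_card himg
  have h3 : (T.image Fin.val).card = T.card :=
    Finset.card_image_of_injective _ Fin.val_injective
  have hrange := Finset.card_range (4*k-1)
  have hT : 2*k ≤ T.card := by omega
  -- Step 2 : choose dominated colors
  haveI : Nonempty (Fin m) := ⟨c ⟨0, by omega⟩⟩
  have hdex : ∀ v ∈ T, ∃ a, Dominates (pathArc (4*k) o) c v a :=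
    fun v hv => hd v (Finset.mem_filter.1 hv).2
  choose! d hdp using hdex
  set S : Finset (Fin m) := T.image d with hSdef
  have hwit : ∀ a ∈ S, ∃ w : Fin (4*k), c w = a ∧ ∃ v ∈ T, d v = a := by
    intro a haS
    obtain ⟨v0, hv0T, hv0⟩ := Finset.mem_image.1 haS
    have := hdp v0 hv0T
    rw [hv0] at this
    obtain ⟨⟨w0, hw0⟩, -⟩ := this
    exact ⟨w0, hw0, v0, hv0T, hv0⟩
  have hfle : ∀ a ∈ S, (T.filter (fun v => d v = a)).card ≤ 2 := by
    intro a haS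
    obtain ⟨w0, hw0, -⟩ := hwit a haS
    apply card_le_two_vals _ Fin.val ((w0:ℕ)-1) ((w0:ℕ)+1)
    · intro x _ y _ he; exact Fin.val_injective he
    · intro v hv
      obtain ⟨hvT, hva⟩ := Finset.mem_filter.1 hv
      have hDom := hdp v hvT
      rw [hva] at hDom
      have hA := hDom.2 w0 hw0
      rcases hadj _ _ hA with h' | h' <;> omega
  have hTS : T.card ≤ 2 * S.card := Finset.card_le_mul_card_image _ 2 hfle
  have hks : k ≤ S.card := by omega
  -- classes
  set C : Fin m → Finset (Fin (4*k)) := fun a => Finset.univ.filter (fun w => c w = a) with hCdef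
  have hC2 : ∀ a ∈ S, (C a).card ≤ 2 := by
    intro a haS
    obtain ⟨-, -, v0, hv0T, hv0⟩ := hwit a haS
    apply card_le_two_vals _ Fin.val ((v0:ℕ)-1) ((v0:ℕ)+1)
    · intro x _ y _ he; exact Fin.val_injective he
    · intro w hw
      obtain ⟨-, hwa⟩ := Finset.mem_filter.1 hw
      have hDom := hdp v0 hv0T
      rw [hv0] at hDom
      have hA := hDom.2 w hwa
      rcases hadj _ _ hA with h' | h' <;> omega
  have hCpos : ∀ a ∈ S, 1 ≤ (C a).card := by
    intro a haS
    obtain ⟨w0, hw0, -⟩ := hwit a haS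
    exact Finset.card_pos.2 ⟨w0, Finset.mem_filter.2 ⟨Finset.mem_univ _, hw0⟩⟩
  have hC1 : ∀ a ∈ S, 2 ≤ (T.filter (fun v => d v = a)).card → (C a).card ≤ 1 := by
    intro a haS h2f
    obtain ⟨v1, hv1, v2, hv2, hne⟩ := Finset.one_lt_card.1 h2f
    obtain ⟨hv1T, hv1a⟩ := Finset.mem_filter.1 hv1
    obtain ⟨hv2T, hv2a⟩ := Finset.mem_filter.1 hv2
    have hD1 := hdp v1 hv1T; rw [hv1a] at hD1
    have hD2 := hdp v2 hv2T; rw [hv2a] at hD2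
    rw [Finset.card_le_one]
    intro w hw w' hw'
    obtain ⟨-, hwa⟩ := Finset.mem_filter.1 hw
    obtain ⟨-, hwa'⟩ := Finset.mem_filter.1 hw'
    have a1 := hadj _ _ (hD1.2 w hwa)
    have a2 := hadj _ _ (hD2.2 w hwa)
    have a3 := hadj _ _ (hD1.2 w' hwa')
    have a4 := hadj _ _ (hD2.2 w' hwa')
    have hvne : (v1:ℕ) ≠ (v2:ℕ) := fun he => hne (Fin.val_injective he)
    have : (w:ℕ) = (w':ℕ) := by omega
    exact Fin.val_injective this
  have hCind : ∀ a, (C a).card ≤ 2*k := by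
    intro a
    have hle : (C a).card ≤ (Finset.range (2*k)).card := by
      apply Finset.card_le_card_of_injOn (fun w : Fin (4*k) => (w:ℕ)/2)
      · intro w _
        simp only [Finset.mem_coe, Finset.mem_range]
        have := w.isLt
        omega
      · intro w hw w' hw' he
        simp only [Finset.mem_coe, hCdef, Finset.mem_filter] at hw hw'
        by_contra hne
        have hvne : (w:ℕ) ≠ (w':ℕ) := fun h' => hne (Fin.val_injective h')
        have hcases : (w:ℕ)+1 = (w':ℕ) ∨ (w':ℕ)+1 = (w:ℕ) := by
          simp only at he
          omega
        rcases hcases with h' | h'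
        · exact hcons w w' h' (hw.2.trans hw'.2.symm)
        · exact hcons w' w h' (hw'.2.trans hw.2.symm)
    simpa using hle
  -- counting
  have hsum : ∑ a : Fin m, (C a).card = 4*k := by
    have := Finset.card_eq_sum_card_fiberwise
      (f := c) (s := (Finset.univ : Finset (Fin (4*k)))) (t := Finset.univ)
      (fun x _ => Finset.mem_univ (c x))
    simp only [Finset.card_univ, Fintype.card_fin] at this
    exact this.symm
  have hsplit : ∑ a ∈ S, (C a).card + ∑ a ∈ Sᶜ, (C a).card = 4*k := by
    rw [Finset.sum_add_sum_compl]
    exact hsum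
  have hfibsum : ∑ a ∈ S, (T.filter (fun v => d v = a)).card = T.card :=
    (Finset.card_eq_sum_card_fiberwise (fun v hv => Finset.mem_image_of_mem d hv)).symm
  have hmain : ∑ a ∈ S, ((C a).card + (T.filter (fun v => d v = a)).card) ≤ S.card * 3 := by
    apply Finset.sum_le_card_nsmul
    intro a ha
    have e1 := hC2 a ha
    have e2 := hfle a ha
    rcases le_or_gt 2 ((T.filter (fun v => d v = a)).card) with h2f | h2f
    · have := hC1 a ha h2f
      omega
    · omega
  have hA1 : ∑ a ∈ S, (C a).card + T.card ≤ 3 * S.card := by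
    rw [← hfibsum, ← Finset.sum_add_distrib]
    omega
  have hSc : ∑ a ∈ Sᶜ, (C a).card ≤ (m - S.card) * (2*k) := by
    have hcard : Sᶜ.card = m - S.card := by
      simp [Finset.card_compl]
    calc ∑ a ∈ Sᶜ, (C a).card ≤ Sᶜ.card • (2*k) :=
          Finset.sum_le_card_nsmul _ _ _ (fun a _ => hCind a)
      _ = (m - S.card) * (2*k) := by rw [hcard, smul_eq_mul]
  have hsm : S.card ≤ m := by
    have := Finset.card_le_univ S
    simpa using this
  have hcase : S.card = m ∨ m - S.card = 1 := by omega
  rcases hcase with hq | hq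
  · rw [hq, Nat.sub_self, zero_mul, Nat.le_zero] at hSc
    have hk1 : k = 1 := by omega
    have hm2 : m = 2 := by omega
    subst hk1; subst hm2
    exact aux4 (fun j => o (j : ℕ)) c ⟨hp, hd⟩
  · rw [hq, one_mul] at hSc
    omega

lemma upper_bound (k : ℕ) (hk : 1 ≤ k) :
    IsDominatorColoring (pathArc (4*k) (fun i => i % 2 == 1))
      (fun v : Fin (4*k) =>
        if (v:ℕ) % 4 = 2 then (⟨(v:ℕ)/4, by have := v.isLt; omega⟩ : Fin (k+2))
        else if (v:ℕ) % 2 = 0 then ⟨k, by omega⟩ else ⟨k+1, by omega⟩) := by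
  constructor
  · rintro u v (⟨he, hb⟩ | ⟨he, hb⟩) heq <;>
    · simp only [beq_iff_eq] at hb
      have h1 := u.isLt
      have h2 := v.isLt
      have := congrArg Fin.val heq
      simp only [apply_ite Fin.val] at this
      split_ifs at this <;> omega
  · rintro v ⟨w, hw⟩
    have h1 := v.isLt
    have hv2 : (v:ℕ) % 2 = 1 := by
      rcases hw with ⟨he, hb⟩ | ⟨he, hb⟩ <;> simp only [beq_iff_eq, beq_eq_false_iff_ne] at hb
      · exact hb
      · have := w.isLt; omega
    refine ⟨⟨(v:ℕ)/4, by omega⟩, ⟨⟨4*((v:ℕ)/4)+2, by omega⟩, ?_⟩, ?_⟩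
    · apply Fin.ext
      simp only [apply_ite Fin.val]
      split_ifs <;> omega
    · intro w' hw'
      have h2 := w'.isLt
      have := congrArg Fin.val hw'
      simp only [apply_ite Fin.val] at this
      have hvw : ((v:ℕ)+1 = (w':ℕ) ∧ (v:ℕ) % 2 = 1) ∨ ((w':ℕ)+1 = (v:ℕ) ∧ (w':ℕ) % 2 = 0) := by
        split_ifs at this <;> omega
      rcases hvw with ⟨h', h''⟩ | ⟨h', h''⟩
      · exact Or.inl ⟨h', by simp [h'']⟩
      · exact Or.inr ⟨h', by simp [h'']⟩

theorem min_domChrom_orientations_of_path_four_k (k : ℕ) (hk : 1 ≤ k) :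
    minDomChromPath (4 * k) = k + 2 := by
  classical
  have hnonempty : ∀ o : ℕ → Bool,
      (4*k) ∈ {m' | ∃ c : Fin (4*k) → Fin m', IsDominatorColoring (pathArc (4*k) o) c} := by
    intro o
    refine ⟨fun v => v, ?_, ?_⟩
    · rintro u v (⟨h1, _⟩ | ⟨h1, _⟩) heq <;> (cases heq; omega)
    · rintro v ⟨w, hw⟩
      exact ⟨w, ⟨w, rfl⟩, fun x hx => by rw [show x = w from hx]; exact hw⟩
  have hlow : ∀ o : ℕ → Bool, k + 2 ≤ domChrom (pathArc (4*k) o) := by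
    intro o
    have hne : {m' | ∃ c : Fin (4*k) → Fin m',
        IsDominatorColoring (pathArc (4*k) o) c}.Nonempty := ⟨4*k, hnonempty o⟩
    obtain ⟨c, hc⟩ := Nat.sInf_mem hne
    exact lower_bound k hk o _ c hc
  have hup : domChrom (pathArc (4*k) (fun i => i % 2 == 1)) ≤ k + 2 :=
    Nat.sInf_le ⟨_, upper_bound k hk⟩
  have hmemM : domChrom (pathArc (4*k) (fun i => i % 2 == 1)) ∈
      {m | ∃ o : ℕ → Bool, m = domChrom (pathArc (4*k) o)} := ⟨_, rfl⟩
  have h1 : minDomChromPath (4*k) ≤ k + 2 := le_trans (Nat.sInf_le hmemM) hup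
  have h2 : k + 2 ≤ minDomChromPath (4*k) := by
    have hne : {m | ∃ o : ℕ → Bool, m = domChrom (pathArc (4*k) o)}.Nonempty := ⟨_, hmemM⟩
    obtain ⟨o, ho⟩ := Nat.sInf_mem hne
    rw [minDomChromPath, ho]
    exact hlow o
  omega
end

section
/- The minimum of the dominator chromatic number χ_d(D) over all orientations D of the path P_6 equals 3. -/
/-- `pathArc 6 o` rewritten with a `Fin 6 → Bool` orientation (for decidability). -/
def pathArc6 (o : Fin 6 → Bool) (u v : Fin 6) : Prop :=
  ((u : ℕ) + 1 = (v : ℕ) ∧ o u = true) ∨ ((v : ℕ) + 1 = (u : ℕ) ∧ o v = false)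

instance {V α : Type*} (A : V → V → Prop) [Fintype V] [DecidableEq α]
    [∀ v w, Decidable (A v w)] (c : V → α) (v : V) (a : α) :
    Decidable (Dominates A c v a) := by unfold Dominates; infer_instance

instance {V α : Type*} (A : V → V → Prop) [Fintype V] [Fintype α] [DecidableEq α]
    [∀ v w, Decidable (A v w)] (c : V → α) :
    Decidable (IsDominatorColoring A c) := by unfold IsDominatorColoring; infer_instance

instance (o : Fin 6 → Bool) (u v : Fin 6) : Decidable (pathArc6 o u v) := by
  unfold pathArc6; infer_instance

lemma pathArc_eq (o : ℕ → Bool) : pathArc 6 o = pathArc6 (fun i : Fin 6 => o i) := rfl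

/-- The identity coloring is always a dominator coloring. -/
lemma id_isDom (o : ℕ → Bool) :
    IsDominatorColoring (pathArc 6 o) (fun v : Fin 6 => v) := by
  constructor
  · rintro u v (⟨h, -⟩ | ⟨h, -⟩) hc <;> simp only at hc <;> subst hc <;> omega
  · rintro v ⟨w, hw⟩
    exact ⟨w, ⟨w, rfl⟩, fun w' hw' => by rw [show w' = w from hw']; exact hw⟩

lemma six_mem (o : ℕ → Bool) :
    6 ∈ {k | ∃ c : Fin 6 → Fin k, IsDominatorColoring (pathArc 6 o) c} :=
  ⟨fun v : Fin 6 => v, id_isDom o⟩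

set_option maxRecDepth 100000 in
set_option maxHeartbeats 2000000 in
lemma no_small (o : ℕ → Bool) (k : ℕ) (hk : k < 3) (c : Fin 6 → Fin k) :
    ¬ IsDominatorColoring (pathArc 6 o) c := by
  rw [pathArc_eq]
  interval_cases k
  · exact (c 0).elim0
  · revert c
    have : ∀ (o' : Fin 6 → Bool) (c : Fin 6 → Fin 1),
        ¬ IsDominatorColoring (pathArc6 o') c := by decide
    exact this _
  · revert c
    have : ∀ (o' : Fin 6 → Bool) (c : Fin 6 → Fin 2),
        ¬ IsDominatorColoring (pathArc6 o') c := by decide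
    exact this _

lemma domChrom_ge (o : ℕ → Bool) : 3 ≤ domChrom (pathArc 6 o) := by
  by_contra h
  push_neg at h
  obtain ⟨c, hc⟩ := Nat.sInf_mem (⟨6, six_mem o⟩ :
    Set.Nonempty {k | ∃ c : Fin 6 → Fin k, IsDominatorColoring (pathArc 6 o) c})
  exact no_small o _ h c hc

/-- The good orientation. -/
def oGood : ℕ → Bool := fun i => decide (i = 1 ∨ i = 3)

/-- The good coloring. -/
def cGood : Fin 6 → Fin 3 := ![0, 1, 0, 1, 2, 1]

lemma good_isDom : IsDominatorColoring (pathArc 6 oGood) cGood := by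
  rw [pathArc_eq]
  decide

lemma domChrom_good : domChrom (pathArc 6 oGood) = 3 := by
  refine le_antisymm (Nat.sInf_le ⟨cGood, good_isDom⟩) (domChrom_ge oGood)

theorem min_domChrom_orientations_of_path_six : minDomChromPath 6 = 3 := by
  unfold minDomChromPath
  refine le_antisymm (Nat.sInf_le ⟨oGood, domChrom_good.symm⟩) ?_
  have hne : {m | ∃ o : ℕ → Bool, m = domChrom (pathArc 6 o)}.Nonempty :=
    ⟨3, oGood, domChrom_good.symm⟩
  obtain ⟨o, ho⟩ := Nat.sInf_mem hne
  exact ho ▸ domChrom_ge o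
end

section
/- For every integer n ≥ 4 with n ≠ 6, every orientation D of the path P_n satisfies χ_d(D) ≥ f(n), where f(4k) = k+2, f(4k+1) = k+2, f(4k+2) = k+3, and f(4k+3) = k+3 for k ≥ 1. -/
namespace DCP

instance {n : ℕ} (o : ℕ → Bool) (u v : Fin n) : Decidable (pathArc n o u v) := by
  unfold pathArc; infer_instance

instance {n m : ℕ} (o : ℕ → Bool) (c : Fin n → Fin m) (v : Fin n) (a : Fin m) :
    Decidable (Dominates (pathArc n o) c v a) := by
  unfold Dominates; infer_instance

instance {n m : ℕ} (o : ℕ → Bool) (c : Fin n → Fin m) :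
    Decidable (IsDominatorColoring (pathArc n o) c) := by
  unfold IsDominatorColoring; infer_instance

variable {n m : ℕ}

lemma arc_cases {o : ℕ → Bool} {u v : Fin n} (h : pathArc n o u v) :
    (u:ℕ)+1 = (v:ℕ) ∨ (v:ℕ)+1 = (u:ℕ) := by
  rcases h with ⟨h,_⟩|⟨h,_⟩
  · exact Or.inl h
  · exact Or.inr h

lemma edge_tail (o : ℕ → Bool) {i : ℕ} (h : i + 1 < n) :
    pathArc n o ⟨i, by omega⟩ ⟨i+1, h⟩ ∨ pathArc n o ⟨i+1, h⟩ ⟨i, by omega⟩ := by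
  cases ho : o i
  · right; right; exact ⟨rfl, ho⟩
  · left; left; exact ⟨rfl, ho⟩

lemma isDomCol_comp {V α β : Type*} {A : V → V → Prop} {c : V → α} {f : α → β}
    (hf : Function.Injective f) (h : IsDominatorColoring A c) :
    IsDominatorColoring A (f ∘ c) := by
  obtain ⟨h1, h2⟩ := h
  refine ⟨fun u v huv hcc => h1 u v huv (hf hcc), fun v hv => ?_⟩
  obtain ⟨a, ⟨w, hw⟩, hall⟩ := h2 v hv
  exact ⟨f a, ⟨w, by simp [hw]⟩, fun w' hw' => hall w' (hf hw')⟩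

lemma pathArc_congr {o o' : ℕ → Bool} (h : ∀ i, i + 1 < n → o i = o' i) :
    pathArc n o = pathArc n o' := by
  funext u v
  apply propext
  constructor <;> rintro (⟨h1, h2⟩|⟨h1, h2⟩)
  · exact Or.inl ⟨h1, by rw [← h u (by rw [h1]; exact v.isLt)]; exact h2⟩
  · exact Or.inr ⟨h1, by rw [← h v (by rw [h1]; exact u.isLt)]; exact h2⟩
  · exact Or.inl ⟨h1, by rw [h u (by rw [h1]; exact v.isLt)]; exact h2⟩
  · exact Or.inr ⟨h1, by rw [h v (by rw [h1]; exact u.isLt)]; exact h2⟩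

end DCP

namespace DCP
open Finset
variable {n m : ℕ}

open Classical in
/-- set of vertices with positive out-degree -/
noncomputable def tailS (n : ℕ) (o : ℕ → Bool) : Finset (Fin n) :=
  Finset.univ.filter (fun v => ∃ w, pathArc n o v w)

/-- color class -/
def clS (c : Fin n → Fin m) (a : Fin m) : Finset (Fin n) :=
  Finset.univ.filter (fun w => c w = a)

open Classical in
/-- dominator set of a color -/
noncomputable def dmS (o : ℕ → Bool) (c : Fin n → Fin m) (a : Fin m) : Finset (Fin n) :=
  Finset.univ.filter (fun v => Dominates (pathArc n o) c v a)

/-- the tail of edge i -/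
noncomputable def tailF (o : ℕ → Bool) (hn : 0 < n) (i : ℕ) : Fin n :=
  if h : i + 1 < n then
    (if pathArc n o ⟨i, by omega⟩ ⟨i+1, h⟩ then ⟨i, by omega⟩ else ⟨i+1, h⟩)
  else ⟨0, hn⟩

lemma tailF_spec (o : ℕ → Bool) (hn : 0 < n) {i : ℕ} (h : i + 1 < n) :
    ((tailF o hn i : ℕ) = i ∨ (tailF o hn i : ℕ) = i + 1) ∧
      ∃ w, pathArc n o (tailF o hn i) w := by
  unfold tailF
  rw [dif_pos h]
  by_cases harc : pathArc n o ⟨i, by omega⟩ ⟨i+1, h⟩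
  · rw [if_pos harc]; exact ⟨Or.inl rfl, ⟨i+1, h⟩, harc⟩
  · rw [if_neg harc]
    refine ⟨Or.inr rfl, ⟨i, by omega⟩, ?_⟩
    rcases edge_tail o h with h'|h'
    · exact absurd h' harc
    · exact h'

lemma tailS_card (o : ℕ → Bool) (hn : 0 < n) : n / 2 ≤ (tailS n o).card := by
  classical
  have key : (Finset.range (n-1)).card ≤ 2 * ((Finset.range (n-1)).image (tailF o hn)).card := by
    apply Finset.card_le_mul_card_image
    intro a _
    have hsub : (Finset.range (n-1)).filter (fun x => tailF o hn x = a) ⊆ {(a:ℕ) - 1, (a:ℕ)} := by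
      intro i hi
      simp only [Finset.mem_filter, Finset.mem_range] at hi
      obtain ⟨hi1, hi2⟩ := hi
      have := (tailF_spec o hn (show i + 1 < n by omega)).1
      rw [hi2] at this
      simp only [Finset.mem_insert, Finset.mem_singleton]
      omega
    calc ((Finset.range (n-1)).filter (fun x => tailF o hn x = a)).card
        ≤ ({(a:ℕ) - 1, (a:ℕ)} : Finset ℕ).card := Finset.card_le_card hsub
      _ ≤ 2 := by
          apply le_trans (Finset.card_insert_le _ _); simp
  have hsub2 : (Finset.range (n-1)).image (tailF o hn) ⊆ tailS n o := by
    intro v hv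
    simp only [Finset.mem_image, Finset.mem_range] at hv
    obtain ⟨i, hi, rfl⟩ := hv
    have := (tailF_spec o hn (show i + 1 < n by omega)).2
    simp only [tailS, Finset.mem_filter, Finset.mem_univ, true_and]
    exact this
  have := Finset.card_le_card hsub2
  simp only [Finset.card_range] at key
  omega

/-- a set of vertices whose values lie in a 2-element set has card ≤ 2 -/
lemma card_le_two_of_vals {s : Finset (Fin n)} {x y : ℕ}
    (h : ∀ v ∈ s, (v:ℕ) = x ∨ (v:ℕ) = y) :
    s.card ≤ 2 := by
  classical
  calc s.card
      ≤ ({x, y} : Finset ℕ).card := by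
        refine Finset.card_le_card_of_injOn (fun v => (v:ℕ)) ?_ ?_
        · intro v hv
          simp only [Finset.mem_coe, Finset.mem_insert, Finset.mem_singleton]
          exact h v hv
        · intro u _ v _ huv
          exact Fin.ext huv
    _ ≤ 2 := by apply le_trans (Finset.card_insert_le _ _); simp

lemma percolor (o : ℕ → Bool) (c : Fin n → Fin m) (a : Fin m)
    (hd : ∃ v, Dominates (pathArc n o) c v a) :
    (clS c a).card + (dmS o c a).card ≤ 3 := by
  classical
  obtain ⟨v₀, ⟨w₀, hw₀⟩, hall⟩ := hd
  by_cases h2 : ∃ w₁ w₂ : Fin n, c w₁ = a ∧ c w₂ = a ∧ w₁ ≠ w₂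
  · -- class has ≥ 2 elements: dominator unique
    obtain ⟨w₁, w₂, hw₁, hw₂, hne⟩ := h2
    have hdm : (dmS o c a).card ≤ 1 := by
      rw [Finset.card_le_one]
      intro u hu v hv
      simp only [dmS, Finset.mem_filter, Finset.mem_univ, true_and] at hu hv
      have h1 := arc_cases (hu.2 w₁ hw₁)
      have h2 := arc_cases (hu.2 w₂ hw₂)
      have h3 := arc_cases (hv.2 w₁ hw₁)
      have h4 := arc_cases (hv.2 w₂ hw₂)
      have hne' : (w₁:ℕ) ≠ (w₂:ℕ) := fun h => hne (Fin.ext h)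
      apply Fin.ext; omega
    have hcl : (clS c a).card ≤ 2 := by
      apply card_le_two_of_vals (x := (v₀:ℕ) + 1) (y := (v₀:ℕ) - 1)
      intro v hv
      simp only [clS, Finset.mem_filter, Finset.mem_univ, true_and] at hv
      have := arc_cases (hall v hv)
      omega
    omega
  · -- class has ≤ 1 element
    push_neg at h2
    have hcl : (clS c a).card ≤ 1 := by
      rw [Finset.card_le_one]
      intro u hu v hv
      simp only [clS, Finset.mem_filter, Finset.mem_univ, true_and] at hu hv
      exact h2 u v hu hv
    have hdm : (dmS o c a).card ≤ 2 := by
      apply card_le_two_of_vals (x := (w₀:ℕ) + 1) (y := (w₀:ℕ) - 1)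
      intro v hv
      simp only [dmS, Finset.mem_filter, Finset.mem_univ, true_and] at hv
      have := arc_cases (hv.2 w₀ hw₀)
      omega
    omega

end DCP

namespace DCP
open Finset
variable {n m : ℕ}

open Classical in
/-- assigned dominated color of a vertex -/
noncomputable def gF (o : ℕ → Bool) (c : Fin n → Fin m) (v : Fin n) : Fin m :=
  if h : ∃ a, Dominates (pathArc n o) c v a then h.choose else c v

lemma gF_spec {o : ℕ → Bool} {c : Fin n → Fin m} {v : Fin n}
    (h : ∃ a, Dominates (pathArc n o) c v a) :
    Dominates (pathArc n o) c v (gF o c v) := by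
  unfold gF
  rw [dif_pos h]
  exact h.choose_spec

lemma tail_sum (o : ℕ → Bool) (c : Fin n → Fin m)
    (hc : IsDominatorColoring (pathArc n o) c) (A' : Finset (Fin m))
    (hA : ∀ v a, Dominates (pathArc n o) c v a → a ∈ A') :
    (tailS n o).card ≤ ∑ a ∈ A', (dmS o c a).card := by
  classical
  have hmem : ∀ v ∈ tailS n o, gF o c v ∈ A' := by
    intro v hv
    simp only [tailS, Finset.mem_filter, Finset.mem_univ, true_and] at hv
    exact hA v _ (gF_spec (hc.2 v hv))
  rw [Finset.card_eq_sum_card_fiberwise hmem]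
  apply Finset.sum_le_sum
  intro a _
  apply Finset.card_le_card
  intro v hv
  simp only [Finset.mem_filter] at hv
  obtain ⟨hv1, hv2⟩ := hv
  simp only [tailS, Finset.mem_filter, Finset.mem_univ, true_and] at hv1
  simp only [dmS, Finset.mem_filter, Finset.mem_univ, true_and]
  rw [← hv2]
  exact gF_spec (hc.2 v hv1)

lemma class_sum (c : Fin n → Fin m) (A' : Finset (Fin m)) [DecidablePred (fun v => c v ∈ A')] :
    (Finset.univ.filter (fun v => c v ∈ A')).card = ∑ a ∈ A', (clS c a).card := by
  classical
  rw [Finset.card_eq_sum_card_fiberwise (f := c) (s := Finset.univ.filter (fun v => c v ∈ A')) (t := A')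
    (fun v hv => (Finset.mem_filter.mp hv).2)]
  apply Finset.sum_congr rfl
  intro a ha
  congr 1
  ext v
  simp only [Finset.mem_filter, Finset.mem_univ, true_and, clS]
  constructor
  · rintro ⟨_, h⟩; exact h
  · intro h; exact ⟨h ▸ ha, h⟩

lemma indep_card (o : ℕ → Bool) (c : Fin n → Fin m)
    (hc : IsDominatorColoring (pathArc n o) c) (b₀ : Fin m) :
    (Finset.univ.filter (fun v => c v = b₀)).card ≤ (n+1)/2 := by
  classical
  have key : ∀ u v : Fin n, c u = b₀ → c v = b₀ → (u:ℕ) + 1 = (v:ℕ) → False := by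
    intro u v hu hv huv
    have h1 : ((u:ℕ)) + 1 < n := by rw [huv]; exact v.isLt
    have hv' : v = ⟨(u:ℕ)+1, h1⟩ := Fin.ext (by simp [huv])
    have hu' : u = ⟨(u:ℕ), by omega⟩ := Fin.ext rfl
    rcases edge_tail o h1 with h'|h'
    · exact hc.1 _ _ h' (by rw [← hu', ← hv', hu, hv])
    · exact hc.1 _ _ h' (by rw [← hu', ← hv', hu, hv])
  calc (Finset.univ.filter (fun v => c v = b₀)).card
      ≤ (Finset.range ((n+1)/2)).card := by
        refine Finset.card_le_card_of_injOn (fun v => (v:ℕ)/2) ?_ ?_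
        · intro v _
          simp only [Finset.mem_coe, Finset.mem_range]
          have := v.isLt
          omega
        · intro u hu v hv huv
          simp only [Finset.mem_coe, Finset.mem_filter, Finset.mem_univ, true_and] at hu hv
          simp only at huv
          by_contra hne
          have hne' : (u:ℕ) ≠ (v:ℕ) := fun h => hne (Fin.ext h)
          have : (u:ℕ) + 1 = (v:ℕ) ∨ (v:ℕ) + 1 = (u:ℕ) := by omega
          rcases this with h'|h'
          · exact key u v hu hv h'
          · exact key v u hv hu h'
    _ = (n+1)/2 := Finset.card_range _

lemma block (o : ℕ → Bool) (c : Fin n → Fin m)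
    (hc : IsDominatorColoring (pathArc n o) c) {e : ℕ} (he : e + 1 < n) :
    ∃ a, (∃ v, Dominates (pathArc n o) c v a) ∧
      ∀ w : Fin n, c w = a → e - 1 ≤ (w:ℕ) ∧ (w:ℕ) ≤ e + 2 := by
  rcases edge_tail o he with h'|h'
  · obtain ⟨a, ha⟩ := hc.2 ⟨e, by omega⟩ ⟨_, h'⟩
    refine ⟨a, ⟨_, ha⟩, fun w hw => ?_⟩
    have := arc_cases (ha.2 w hw)
    simp only at this
    omega
  · obtain ⟨a, ha⟩ := hc.2 ⟨e+1, he⟩ ⟨_, h'⟩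
    refine ⟨a, ⟨_, ha⟩, fun w hw => ?_⟩
    have := arc_cases (ha.2 w hw)
    simp only at this
    omega

end DCP

namespace DCP
open Finset
variable {n m : ℕ}

lemma core (o : ℕ → Bool) (c : Fin n → Fin m) (hc : IsDominatorColoring (pathArc n o) c)
    (hn : 0 < n) (K : ℕ) (E : ℕ → ℕ) (hE : ∀ j, j < K → E j + 1 < n)
    (hsep : ∀ i j, i < j → j < K → E i + 4 ≤ E j) :
    K + 2 ≤ m ∨ n + n/2 ≤ 3*m ∨
      ∃ b₀ : Fin m, (∀ v, ¬ Dominates (pathArc n o) c v b₀) ∧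
        n + (tailS n o).card ≤ 3*K +
          (Finset.univ.filter (fun v => c v = b₀)).card := by
  classical
  have hm0 : 0 < m := by
    rcases Nat.eq_zero_or_pos m with h|h
    · subst h; exact (c ⟨0, hn⟩).elim0
    · exact h
  set aa : ℕ → Fin m := fun j =>
    if h : j < K then (block o c hc (hE j h)).choose else ⟨0, hm0⟩ with haa_def
  have haa : ∀ j (h : j < K), (∃ v, Dominates (pathArc n o) c v (aa j)) ∧
      ∀ w : Fin n, c w = aa j → E j - 1 ≤ (w:ℕ) ∧ (w:ℕ) ≤ E j + 2 := by
    intro j h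
    have := (block o c hc (hE j h)).choose_spec
    simpa [haa_def, dif_pos h] using this
  have hkey : ∀ i j, i < j → j < K → aa i ≠ aa j := by
    intro i j hij hjK heq
    obtain ⟨⟨v, ⟨w, hw⟩, _⟩, hbi⟩ := haa i (lt_trans hij hjK)
    have h1 := hbi w hw
    have h2 := (haa j hjK).2 w (heq ▸ hw)
    have h3 := hsep i j hij hjK
    omega
  have hinj : Set.InjOn aa (Finset.range K) := by
    intro i hi j hj hij
    simp only [Finset.coe_range, Set.mem_Iio] at hi hj
    by_contra hne
    rcases Nat.lt_or_ge i j with h|h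
    · exact hkey i j h hj hij
    · exact hkey j i (by omega) hi hij.symm
  set A' : Finset (Fin m) := (Finset.range K).image aa with hA'_def
  have hcardA : A'.card = K := by
    rw [hA'_def, Finset.card_image_of_injOn hinj, Finset.card_range]
  have hDomA : ∀ a ∈ A', ∃ v, Dominates (pathArc n o) c v a := by
    intro a ha
    rw [hA'_def] at ha
    obtain ⟨j, hj, rfl⟩ := Finset.mem_image.mp ha
    exact (haa j (Finset.mem_range.mp hj)).1
  by_cases hK : K + 2 ≤ m
  · exact Or.inl hK
  have hmK : m ≤ K + 1 := by omega
  have hTcard := tailS_card o hn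
  by_cases hall : ∀ a : Fin m, (∃ w, c w = a) → ∃ v, Dominates (pathArc n o) c v a
  · refine Or.inr (Or.inl ?_)
    set A₂ : Finset (Fin m) := Finset.univ.image c with hA₂_def
    have h1 : n = ∑ a ∈ A₂, (clS c a).card := by
      have := Finset.card_eq_sum_card_fiberwise
        (f := c) (s := (Finset.univ : Finset (Fin n))) (t := A₂)
        (fun v _ => Finset.mem_image_of_mem c (Finset.mem_univ v))
      simpa [clS] using this
    have h2 : (tailS n o).card ≤ ∑ a ∈ A₂, (dmS o c a).card := by
      apply tail_sum o c hc
      intro v a hv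
      obtain ⟨w, hw⟩ := hv.1
      exact hw ▸ Finset.mem_image_of_mem c (Finset.mem_univ w)
    have h3 : ∑ a ∈ A₂, ((clS c a).card + (dmS o c a).card) ≤ A₂.card * 3 := by
      apply Finset.sum_le_card_nsmul
      intro a ha
      apply percolor
      apply hall
      obtain ⟨w, _, hw⟩ := Finset.mem_image.mp ha
      exact ⟨w, hw⟩
    rw [Finset.sum_add_distrib] at h3
    have h4 : A₂.card ≤ m := by
      calc A₂.card ≤ (Finset.univ : Finset (Fin m)).card := Finset.card_le_univ _
        _ = m := by simp
    omega
  · push_neg at hall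
    obtain ⟨b₀, hbused, hbnd⟩ := hall
    refine Or.inr (Or.inr ⟨b₀, hbnd, ?_⟩)
    have hbA : b₀ ∉ A' := by
      intro hmem
      exact hbnd ((hDomA b₀ hmem).choose) ((hDomA b₀ hmem).choose_spec)
    have hcard : (insert b₀ A').card = K + 1 := by
      rw [Finset.card_insert_of_notMem hbA, hcardA]
    have hle : K + 1 ≤ m := by
      calc K + 1 = (insert b₀ A').card := hcard.symm
        _ ≤ (Finset.univ : Finset (Fin m)).card := Finset.card_le_univ _
        _ = m := by simp
    have huniv : insert b₀ A' = Finset.univ := by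
      apply Finset.eq_univ_of_card
      rw [hcard]; simp; omega
    have hA'dom : ∀ (v : Fin n) (a : Fin m), Dominates (pathArc n o) c v a → a ∈ A' := by
      intro v a hv
      have : a ∈ insert b₀ A' := huniv ▸ Finset.mem_univ a
      rcases Finset.mem_insert.mp this with h|h
      · exact absurd (h ▸ hv) (hbnd v)
      · exact h
    have hT : (tailS n o).card ≤ ∑ a ∈ A', (dmS o c a).card := tail_sum o c hc A' hA'dom
    have hS : (Finset.univ.filter (fun v => c v ∈ A')).card = ∑ a ∈ A', (clS c a).card :=
      class_sum c A'
    have hsum : ∑ a ∈ A', ((clS c a).card + (dmS o c a).card) ≤ A'.card * 3 :=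
      Finset.sum_le_card_nsmul _ _ _ (fun a ha => percolor o c a (hDomA a ha))
    rw [Finset.sum_add_distrib] at hsum
    have hcover : n ≤ (Finset.univ.filter (fun v => c v ∈ A')).card
        + (Finset.univ.filter (fun v => c v = b₀)).card := by
      have hsub : (Finset.univ : Finset (Fin n)) ⊆
          (Finset.univ.filter (fun v => c v ∈ A')) ∪ (Finset.univ.filter (fun v => c v = b₀)) := by
        intro v _
        have : c v ∈ insert b₀ A' := huniv ▸ Finset.mem_univ _
        rcases Finset.mem_insert.mp this with h|h
        · exact Finset.mem_union_right _ (Finset.mem_filter.mpr ⟨Finset.mem_univ _, h⟩)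
        · exact Finset.mem_union_left _ (Finset.mem_filter.mpr ⟨Finset.mem_univ _, h⟩)
      calc n = (Finset.univ : Finset (Fin n)).card := by simp
        _ ≤ _ := Finset.card_le_card hsub
        _ ≤ _ := Finset.card_union_le _ _
    rw [hcardA] at hsum
    omega

end DCP

namespace DCP
open Finset
variable {n m : ℕ}

lemma no_consec {o : ℕ → Bool} {c : Fin n → Fin m}
    (hc : IsDominatorColoring (pathArc n o) c) {b₀ : Fin m} {u v : Fin n}
    (hu : c u = b₀) (hv : c v = b₀) (huv : (u:ℕ) + 1 = (v:ℕ)) : False := by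
  have h1 : ((u:ℕ)) + 1 < n := by rw [huv]; exact v.isLt
  have hv' : v = ⟨(u:ℕ)+1, h1⟩ := Fin.ext (by simp [huv])
  have hu' : u = ⟨(u:ℕ), by omega⟩ := Fin.ext rfl
  rcases edge_tail o h1 with h'|h'
  · exact hc.1 _ _ h' (by rw [← hu', ← hv', hu, hv])
  · exact hc.1 _ _ h' (by rw [← hu', ← hv', hu, hv])

-- decidable combinatorial fact: a 4-element independent set in P_7 contains 0 and 2
set_option maxRecDepth 10000 in
lemma indep_seven : ∀ q : Fin 7 → Bool,
    (Finset.univ.filter (fun v => q v = true)).card = 4 →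
    (∀ u v : Fin 7, q u = true → q v = true → (u:ℕ)+1 = (v:ℕ) → False) →
    q 0 = true ∧ q 2 = true := by decide

-- decidable fact about orientations of P_7: few tails forces vertex 1 to be a source
set_option maxRecDepth 10000 in
set_option maxHeartbeats 1000000 in
lemma source_seven : ∀ ob : Fin 6 → Bool,
    (tailS 7 (fun i => if h : i < 6 then ob ⟨i, h⟩ else true)).card ≤ 3 →
    pathArc 7 (fun i => if h : i < 6 then ob ⟨i, h⟩ else true) ⟨1, by omega⟩ ⟨0, by omega⟩ ∧
    pathArc 7 (fun i => if h : i < 6 then ob ⟨i, h⟩ else true) ⟨1, by omega⟩ ⟨2, by omega⟩ := by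
  decide

lemma seven (o : ℕ → Bool) (c : Fin 7 → Fin 3)
    (hc : IsDominatorColoring (pathArc 7 o) c) : False := by
  classical
  have hcore := core o c hc (by omega) 2 (fun j => 4*j)
    (by intro j hj; show 4*j+1 < 7; omega) (by intro i j hij hj; show 4*i+4 ≤ 4*j; omega)
  rcases hcore with h|h|⟨b₀, hbnd, hineq⟩
  · omega
  · norm_num at h
  · have hB4 : (Finset.univ.filter (fun v => c v = b₀)).card ≤ 4 := by
      have := indep_card o c hc b₀; norm_num at this; exact this
    have hT3 : 3 ≤ (tailS 7 o).card := by
      have := tailS_card o (show 0 < 7 by omega); norm_num at this; exact this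
    have hBeq : (Finset.univ.filter (fun v => c v = b₀)).card = 4 := by omega
    have hTle : (tailS 7 o).card ≤ 3 := by omega
    -- membership of 0 and 2 in the b₀ class
    set q : Fin 7 → Bool := fun v => decide (c v = b₀) with hq_def
    have hfilter : (Finset.univ.filter (fun v => q v = true))
        = (Finset.univ.filter (fun v => c v = b₀)) := by
      ext v; simp [hq_def]
    have hqcard : (Finset.univ.filter (fun v => q v = true)).card = 4 := by
      rw [hfilter]; exact hBeq
    obtain ⟨hq0, hq2⟩ := indep_seven q hqcard (by
      intro u v hu hv huv
      exact no_consec hc (of_decide_eq_true hu) (of_decide_eq_true hv) huv)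
    have hc0 : c ⟨0, by omega⟩ = b₀ := of_decide_eq_true hq0
    have hc2 : c ⟨2, by omega⟩ = b₀ := of_decide_eq_true hq2
    -- vertex 1 is a source
    set ob : Fin 6 → Bool := fun j => o j with hob_def
    have hoo : pathArc 7 o = pathArc 7 (fun i => if h : i < 6 then ob ⟨i, h⟩ else true) := by
      apply pathArc_congr
      intro i hi
      simp only [hob_def]
      rw [dif_pos (by omega)]
    have htail_eq : tailS 7 (fun i => if h : i < 6 then ob ⟨i, h⟩ else true) = tailS 7 o := by
      apply Finset.ext
      intro v
      simp only [tailS, Finset.mem_filter, Finset.mem_univ, true_and]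
      rw [hoo]
    have hsrc := source_seven ob (by rw [htail_eq]; exact hTle)
    rw [← hoo] at hsrc
    obtain ⟨a, ⟨⟨w, hw⟩, hdom⟩⟩ := hc.2 ⟨1, by omega⟩ ⟨⟨0, by omega⟩, hsrc.1⟩
    have hwv : (1:ℕ) + 1 = (w:ℕ) ∨ (w:ℕ) + 1 = 1 := arc_cases (hdom w hw)
    have hwcase : w = (⟨0, by omega⟩ : Fin 7) ∨ w = (⟨2, by omega⟩ : Fin 7) := by
      rcases hwv with h|h
      · right; exact Fin.ext (show (w:ℕ) = 2 by omega)
      · left; exact Fin.ext (show (w:ℕ) = 0 by omega)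
    have hab : a = b₀ := by
      rcases hwcase with h|h
      · rw [← hw, h, hc0]
      · rw [← hw, h, hc2]
    exact hbnd ⟨1, by omega⟩ (by rw [← hab]; exact ⟨⟨w, hw⟩, hdom⟩)

end DCP

namespace DCP
open Finset
variable {n m : ℕ}

set_option maxRecDepth 10000 in
lemma four_dec : ∀ (ob : Fin 3 → Bool) (c : Fin 4 → Fin 2),
    ¬ IsDominatorColoring (pathArc 4 (fun i => if h : i < 3 then ob ⟨i, h⟩ else true)) c := by
  decide

lemma four (o : ℕ → Bool) (c : Fin 4 → Fin 2)
    (hc : IsDominatorColoring (pathArc 4 o) c) : False := by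
  have hoo : pathArc 4 o
      = pathArc 4 (fun i => if h : i < 3 then (fun j : Fin 3 => o j) ⟨i, h⟩ else true) := by
    apply pathArc_congr
    intro i hi
    simp only
    rw [dif_pos (by omega)]
  rw [hoo] at hc
  exact four_dec (fun j : Fin 3 => o j) c hc

lemma get_col (o : ℕ → Bool) (n : ℕ) :
    ∃ c : Fin n → Fin (domChrom (pathArc n o)), IsDominatorColoring (pathArc n o) c := by
  have hid : IsDominatorColoring (pathArc n o) (fun v : Fin n => v) := by
    constructor
    · intro u v h heq
      have h1 := arc_cases h
      have h2 : (u:ℕ) = (v:ℕ) := congrArg Fin.val heq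
      omega
    · rintro v ⟨w, hw⟩
      exact ⟨w, ⟨w, rfl⟩, fun w' hw' => by simp only at hw'; rw [hw']; exact hw⟩
  have hne : {k | ∃ c : Fin n → Fin k, IsDominatorColoring (pathArc n o) c}.Nonempty :=
    ⟨n, fun v => v, hid⟩
  exact Nat.sInf_mem hne

end DCP


theorem domChrom_orientations_of_path_lower_bound (n k : ℕ) (hn : 4 ≤ n) (hn6 : n ≠ 6)
    (hk : 1 ≤ k) (o : ℕ → Bool) :
    (n = 4 * k → k + 2 ≤ domChrom (pathArc n o)) ∧
    (n = 4 * k + 1 → k + 2 ≤ domChrom (pathArc n o)) ∧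
    (n = 4 * k + 2 → k + 3 ≤ domChrom (pathArc n o)) ∧
    (n = 4 * k + 3 → k + 3 ≤ domChrom (pathArc n o)) := by
  classical
  obtain ⟨c, hc⟩ := DCP.get_col o n
  have hB : ∀ b₀ : Fin (domChrom (pathArc n o)),
      (Finset.univ.filter (fun v => c v = b₀)).card ≤ (n+1)/2 :=
    fun b₀ => DCP.indep_card o c hc b₀
  have hT : n/2 ≤ (DCP.tailS n o).card := DCP.tailS_card o (by omega)
  refine ⟨?_, ?_, ?_, ?_⟩ <;> intro hn'
  -- case n = 4k
  · by_cases hk1 : k = 1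
    · -- n = 4 : brute force
      subst hk1
      by_contra hlt
      push_neg at hlt
      have hm2 : domChrom (pathArc n o) ≤ 2 := by omega
      have hc' : IsDominatorColoring (pathArc n o) (Fin.castLE hm2 ∘ c) :=
        DCP.isDomCol_comp (Fin.castLE_injective hm2) hc
      have hn4 : n = 4 := by omega
      subst hn4
      exact DCP.four o _ hc'
    · have hcore := DCP.core o c hc (by omega) k (fun j => 4*j+1)
        (by intro j hj; show 4*j+1+1 < n; omega)
        (by intro i j hij hj; show 4*i+1+4 ≤ 4*j+1; omega)
      rcases hcore with h|h|⟨b₀, _, hineq⟩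
      · exact h
      · omega
      · have := hB b₀; omega
  -- case n = 4k+1
  · have hcore := DCP.core o c hc (by omega) k (fun j => 4*j+1)
      (by intro j hj; show 4*j+1+1 < n; omega)
      (by intro i j hij hj; show 4*i+1+4 ≤ 4*j+1; omega)
    rcases hcore with h|h|⟨b₀, _, hineq⟩
    · exact h
    · omega
    · have := hB b₀; omega
  -- case n = 4k+2
  · have hk2 : 2 ≤ k := by omega
    have hcore := DCP.core o c hc (by omega) (k+1) (fun j => if j = 0 then 0 else 4*j)
      (by intro j hj; show (if j = 0 then 0 else 4*j) + 1 < n; split_ifs <;> omega)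
      (by intro i j hij hj
          show (if i = 0 then 0 else 4*i) + 4 ≤ (if j = 0 then 0 else 4*j)
          split_ifs <;> omega)
    rcases hcore with h|h|⟨b₀, _, hineq⟩
    · exact h
    · omega
    · have := hB b₀; omega
  -- case n = 4k+3
  · by_cases hk1 : k = 1
    · -- n = 7
      subst hk1
      by_contra hlt
      push_neg at hlt
      have hm3 : domChrom (pathArc n o) ≤ 3 := by omega
      have hc' : IsDominatorColoring (pathArc n o) (Fin.castLE hm3 ∘ c) :=
        DCP.isDomCol_comp (Fin.castLE_injective hm3) hc
      have hn7 : n = 7 := by omega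
      subst hn7
      exact DCP.seven o _ hc'
    · have hcore := DCP.core o c hc (by omega) (k+1) (fun j => if j = 0 then 0 else 4*j)
        (by intro j hj; show (if j = 0 then 0 else 4*j) + 1 < n; split_ifs <;> omega)
        (by intro i j hij hj
            show (if i = 0 then 0 else 4*i) + 4 ≤ (if j = 0 then 0 else 4*j)
            split_ifs <;> omega)
      rcases hcore with h|h|⟨b₀, _, hineq⟩
      · exact h
      · omega
      · have := hB b₀; omega
end

section
/- For every integer n ≥ 4 with n ≠ 6, there exists an orientation D of the path P_n with χ_d(D) ≤ f(n), where f(4k) = k+2, f(4k+1) = k+2, f(4k+2) = k+3, and f(4k+3) = k+3 for k ≥ 1. -/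
/-- Value-level coloring: odd vertices get `0`, even vertices congruent to `r`
mod 4 get the special color `2 + v/4`, remaining even vertices get `1`. -/
def cval (r : ℕ) (v : ℕ) : ℕ :=
  if v % 2 = 1 then 0 else if v % 4 = r then 2 + v / 4 else 1

lemma gen (n K r : ℕ) (_hr : r = 0 ∨ r = 2) (hK2 : 2 ≤ K)
    (hK : ∀ v, v < n → v % 4 = r → 2 + v / 4 < K)
    (hs : ∀ v, v < n → v % 2 = 1 → ∃ s, s < n ∧ s % 4 = r ∧ (s = v + 1 ∨ s + 1 = v)) :
    domChrom (pathArc n (fun i => decide (i % 2 = 1))) ≤ K := by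
  have hbound : ∀ v : ℕ, v < n → cval r v < K := by
    intro v hv
    unfold cval
    split_ifs with h1 h2
    · omega
    · exact hK v hv h2
    · omega
  set o : ℕ → Bool := fun i => decide (i % 2 = 1) with ho
  set c : Fin n → Fin K := fun v => ⟨cval r (v : ℕ), hbound _ v.2⟩ with hc
  have harcpar : ∀ u v : Fin n, pathArc n o u v →
      (u : ℕ) % 2 = 1 ∧ (v : ℕ) % 2 = 0 := by
    intro u v h
    rcases h with ⟨h1, h2⟩ | ⟨h1, h2⟩
    · simp only [ho, decide_eq_true_eq] at h2
      omega
    · simp only [ho, decide_eq_false_iff_not] at h2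
      omega
  refine Nat.sInf_le ⟨c, ?_, ?_⟩
  · intro u v h hcuv
    obtain ⟨hu, hv⟩ := harcpar u v h
    have : cval r (u : ℕ) = cval r (v : ℕ) := congrArg Fin.val hcuv
    unfold cval at this
    split_ifs at this <;> omega
  · intro v ⟨w, hw⟩
    have hvodd : (v : ℕ) % 2 = 1 := (harcpar v w hw).1
    obtain ⟨s, hsn, hsr, hside⟩ := hs (v : ℕ) v.2 hvodd
    refine ⟨c ⟨s, hsn⟩, ⟨⟨s, hsn⟩, rfl⟩, ?_⟩
    intro w hw
    have hweq : cval r (w : ℕ) = cval r s := congrArg Fin.val hw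
    have hws : (w : ℕ) = s := by
      unfold cval at hweq
      split_ifs at hweq <;> omega
    rcases hside with h | h
    · exact Or.inl ⟨by omega, by simp [ho, hvodd]⟩
    · refine Or.inr ⟨by omega, ?_⟩
      simp only [ho, decide_eq_false_iff_not, hws]
      omega

theorem domChrom_orientations_of_path_upper_bound (n k : ℕ) (hn : 4 ≤ n) (hn6 : n ≠ 6)
    (hk : 1 ≤ k) :
    ∃ o : ℕ → Bool,
      (n = 4 * k → domChrom (pathArc n o) ≤ k + 2) ∧
      (n = 4 * k + 1 → domChrom (pathArc n o) ≤ k + 2) ∧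
      (n = 4 * k + 2 → domChrom (pathArc n o) ≤ k + 3) ∧
      (n = 4 * k + 3 → domChrom (pathArc n o) ≤ k + 3) := by
  refine ⟨fun i => decide (i % 2 = 1), ?_, ?_, ?_, ?_⟩ <;> intro hnk <;> subst hnk
  · refine gen _ (k + 2) 2 (Or.inr rfl) (by omega) (fun v hv h4 => by omega) ?_
    intro v hv h2
    rcases (by omega : v % 4 = 1 ∨ v % 4 = 3) with h | h
    · exact ⟨v + 1, by omega, by omega, Or.inl rfl⟩
    · exact ⟨v - 1, by omega, by omega, Or.inr (by omega)⟩
  · refine gen _ (k + 2) 2 (Or.inr rfl) (by omega) (fun v hv h4 => by omega) ?_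
    intro v hv h2
    rcases (by omega : v % 4 = 1 ∨ v % 4 = 3) with h | h
    · exact ⟨v + 1, by omega, by omega, Or.inl rfl⟩
    · exact ⟨v - 1, by omega, by omega, Or.inr (by omega)⟩
  · refine gen _ (k + 3) 0 (Or.inl rfl) (by omega) (fun v hv h4 => by omega) ?_
    intro v hv h2
    rcases (by omega : v % 4 = 1 ∨ v % 4 = 3) with h | h
    · exact ⟨v - 1, by omega, by omega, Or.inr (by omega)⟩
    · exact ⟨v + 1, by omega, by omega, Or.inl rfl⟩
  · refine gen _ (k + 3) 2 (Or.inr rfl) (by omega) (fun v hv h4 => by omega) ?_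
    intro v hv h2
    rcases (by omega : v % 4 = 1 ∨ v % 4 = 3) with h | h
    · exact ⟨v + 1, by omega, by omega, Or.inl rfl⟩
    · exact ⟨v - 1, by omega, by omega, Or.inr (by omega)⟩
end

section
/- Every orientation D of a path P_n admits a minimum dominator coloring (i.e., a dominator coloring using exactly χ_d(D) colors) in which all vertices of in-degree zero receive the same color. -/
/-! ### Auxiliary definitions for the proof -/

/-- The color `d` is dominated by some vertex. -/
abbrev Dmd {n k : ℕ} (o : ℕ → Bool) (c : Fin n → Fin k) (d : Fin k) : Prop :=
  ∃ x, Dominates (pathArc n o) c x d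

/-- The vertex `v` has a "free" (undominated) color. -/
abbrev Fr {n k : ℕ} (o : ℕ → Bool) (c : Fin n → Fin k) (v : Fin n) : Prop :=
  ¬ Dmd o c (c v)

/-- `v` is a source (in-degree zero). -/
abbrev Src {n : ℕ} (o : ℕ → Bool) (v : Fin n) : Prop := ¬ ∃ w, pathArc n o w v

/-- All vertices between `u` and `t` (inclusive) are free. -/
abbrev Blk {n k : ℕ} (o : ℕ → Bool) (c : Fin n → Fin k) (u t : Fin n) : Prop :=
  ∀ w : Fin n, (((u:ℕ) ≤ (w:ℕ) ∧ (w:ℕ) ≤ (t:ℕ)) ∨ ((t:ℕ) ≤ (w:ℕ) ∧ (w:ℕ) ≤ (u:ℕ))) →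
    Fr o c w

/-- The parity rule choosing which of the two spare colors a free vertex gets. -/
abbrev Gd {n k : ℕ} (o : ℕ → Bool) (c : Fin n → Fin k) (v : Fin n) : Prop :=
  (∃ s, Src o s ∧ Blk o c v s ∧ (v:ℕ) % 2 = (s:ℕ) % 2) ∨
  ((¬ ∃ s, Src o s ∧ Blk o c v s) ∧ (v:ℕ) % 2 = 0)

lemma arc_nat {n : ℕ} {o : ℕ → Bool} {u v : Fin n} (h : pathArc n o u v) :
    (u:ℕ) + 1 = (v:ℕ) ∨ (v:ℕ) + 1 = (u:ℕ) := by
  rcases h with ⟨h1, _⟩ | ⟨h1, _⟩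
  · exact Or.inl h1
  · exact Or.inr h1

lemma src_fr {n k : ℕ} {o : ℕ → Bool} {c : Fin n → Fin k} {v : Fin n}
    (hv : Src o v) : Fr o c v := by
  rintro ⟨x, hx⟩
  exact hv ⟨x, hx.2 v rfl⟩

/-- Two sources with everything (inclusively) between them free are at distance 0 or 2. -/
lemma block_sources {n k : ℕ} {o : ℕ → Bool} {c : Fin n → Fin k}
    (hc : IsDominatorColoring (pathArc n o) c)
    {s t : Fin n} (hs : Src o s) (ht : Src o t) (hle : (s:ℕ) ≤ (t:ℕ))
    (hfr : ∀ w : Fin n, (s:ℕ) ≤ (w:ℕ) → (w:ℕ) ≤ (t:ℕ) → Fr o c w) :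
    (t:ℕ) = (s:ℕ) ∨ (t:ℕ) = (s:ℕ) + 2 := by
  rcases eq_or_lt_of_le hle with heq | hlt
  · exact Or.inl heq.symm
  right
  have hne1 : (t:ℕ) ≠ (s:ℕ) + 1 := by
    intro h1
    by_cases ho : o (s:ℕ) = true
    · exact ht ⟨s, Or.inl ⟨h1.symm, ho⟩⟩
    · exact hs ⟨t, Or.inr ⟨h1.symm, by simpa using ho⟩⟩
  have hnot : ¬ ((s:ℕ) + 2 < (t:ℕ)) := by
    intro h2
    have hn1 : (s:ℕ) + 1 < n := by have := t.isLt; omega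
    have hn2 : (s:ℕ) + 2 < n := by have := t.isLt; omega
    by_cases ho : o ((s:ℕ) + 1) = true
    · have harc : pathArc n o ⟨(s:ℕ)+1, hn1⟩ ⟨(s:ℕ)+2, hn2⟩ := Or.inl ⟨rfl, ho⟩
      obtain ⟨d, hd⟩ := hc.2 ⟨(s:ℕ)+1, hn1⟩ ⟨⟨(s:ℕ)+2, hn2⟩, harc⟩
      obtain ⟨x, hx⟩ := hd.1
      have hadj : ((s:ℕ)+1) + 1 = (x:ℕ) ∨ (x:ℕ) + 1 = (s:ℕ)+1 := arc_nat (hd.2 x hx)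
      refine hfr x (by omega) (by omega) ⟨⟨(s:ℕ)+1, hn1⟩, ?_⟩
      rw [hx]; exact hd
    · have harc : pathArc n o ⟨(s:ℕ)+2, hn2⟩ ⟨(s:ℕ)+1, hn1⟩ :=
        Or.inr ⟨rfl, by simpa using ho⟩
      obtain ⟨d, hd⟩ := hc.2 ⟨(s:ℕ)+2, hn2⟩ ⟨⟨(s:ℕ)+1, hn1⟩, harc⟩
      obtain ⟨x, hx⟩ := hd.1
      have hadj : ((s:ℕ)+2) + 1 = (x:ℕ) ∨ (x:ℕ) + 1 = (s:ℕ)+2 := arc_nat (hd.2 x hx)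
      refine hfr x (by omega) (by omega) ⟨⟨(s:ℕ)+2, hn2⟩, ?_⟩
      rw [hx]; exact hd
  omega

lemma blk_parity {n k : ℕ} {o : ℕ → Bool} {c : Fin n → Fin k}
    (hc : IsDominatorColoring (pathArc n o) c)
    {s t : Fin n} (hs : Src o s) (ht : Src o t) (hb : Blk o c s t) :
    (s:ℕ) % 2 = (t:ℕ) % 2 := by
  rcases le_total (s:ℕ) (t:ℕ) with h | h
  · have := block_sources hc hs ht h (fun w h1 h2 => hb w (Or.inl ⟨h1, h2⟩))
    omega
  · have := block_sources hc ht hs h (fun w h1 h2 => hb w (Or.inr ⟨h1, h2⟩))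
    omega

lemma blk_ext {n k : ℕ} {o : ℕ → Bool} {c : Fin n → Fin k}
    {x y t : Fin n} (hxy : (x:ℕ) + 1 = (y:ℕ) ∨ (y:ℕ) + 1 = (x:ℕ))
    (hfy : Fr o c y) (hb : Blk o c x t) : Blk o c y t := by
  intro w hw
  by_cases hwy : (w:ℕ) = (y:ℕ)
  · have hwy' : w = y := Fin.val_injective hwy
    rwa [hwy']
  · exact hb w (by omega)

lemma blk_trans {n k : ℕ} {o : ℕ → Bool} {c : Fin n → Fin k}
    {u s t : Fin n} (hbs : Blk o c u s) (hbt : Blk o c u t) : Blk o c s t := by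
  intro w hw
  by_cases hcase : ((u:ℕ) ≤ (w:ℕ) ∧ (w:ℕ) ≤ (s:ℕ)) ∨ ((s:ℕ) ≤ (w:ℕ) ∧ (w:ℕ) ≤ (u:ℕ))
  · exact hbs w hcase
  · exact hbt w (by omega)

lemma gd_flip {n k : ℕ} {o : ℕ → Bool} {c : Fin n → Fin k}
    (hc : IsDominatorColoring (pathArc n o) c)
    {x y : Fin n} (hfx : Fr o c x) (hfy : Fr o c y) (hxy : (x:ℕ) + 1 = (y:ℕ)) :
    Gd o c x ↔ ¬ Gd o c y := by
  by_cases H : ∃ s, Src o s ∧ Blk o c x s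
  · obtain ⟨t, ht, hbt⟩ := H
    have hbyt : Blk o c y t := blk_ext (Or.inl hxy) hfy hbt
    have hX : Gd o c x ↔ (x:ℕ) % 2 = (t:ℕ) % 2 := by
      constructor
      · rintro (⟨s, hs, hbs, hp⟩ | ⟨hno, _⟩)
        · have hst : (s:ℕ) % 2 = (t:ℕ) % 2 := blk_parity hc hs ht (blk_trans hbs hbt)
          omega
        · exact absurd ⟨t, ht, hbt⟩ hno
      · intro hp; exact Or.inl ⟨t, ht, hbt, hp⟩
    have hY : Gd o c y ↔ (y:ℕ) % 2 = (t:ℕ) % 2 := by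
      constructor
      · rintro (⟨s, hs, hbs, hp⟩ | ⟨hno, _⟩)
        · have hst : (s:ℕ) % 2 = (t:ℕ) % 2 := blk_parity hc hs ht (blk_trans hbs hbyt)
          omega
        · exact absurd ⟨t, ht, hbyt⟩ hno
      · intro hp; exact Or.inl ⟨t, ht, hbyt, hp⟩
    rw [hX, hY]; omega
  · have Hy : ¬ ∃ s, Src o s ∧ Blk o c y s := by
      rintro ⟨s, hs, hbs⟩
      exact H ⟨s, hs, blk_ext (Or.inr hxy) hfx hbs⟩
    have hX : Gd o c x ↔ (x:ℕ) % 2 = 0 := by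
      constructor
      · rintro (⟨s, hs, hbs, _⟩ | ⟨_, hp⟩)
        · exact absurd ⟨s, hs, hbs⟩ H
        · exact hp
      · intro hp; exact Or.inr ⟨H, hp⟩
    have hY : Gd o c y ↔ (y:ℕ) % 2 = 0 := by
      constructor
      · rintro (⟨s, hs, hbs, _⟩ | ⟨_, hp⟩)
        · exact absurd ⟨s, hs, hbs⟩ Hy
        · exact hp
      · intro hp; exact Or.inr ⟨Hy, hp⟩
    rw [hX, hY]; omega

theorem exists_min_dominator_coloring_indegree_zero_same_color (n : ℕ) (o : ℕ → Bool) :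
    ∃ c : Fin n → Fin (domChrom (pathArc n o)),
      IsDominatorColoring (pathArc n o) c ∧
      ∀ u v : Fin n, (¬ ∃ w, pathArc n o w u) → (¬ ∃ w, pathArc n o w v) → c u = c v := by
  classical
  have hne : {k | ∃ c : Fin n → Fin k, IsDominatorColoring (pathArc n o) c}.Nonempty := by
    refine ⟨n, fun v => v, ?_, ?_⟩
    · intro u v h hcu
      have hval : (u:ℕ) = (v:ℕ) := congrArg Fin.val hcu
      rcases arc_nat h with h1 | h1 <;> omega
    · rintro v ⟨w, hw⟩
      refine ⟨w, ⟨w, rfl⟩, fun w' h => ?_⟩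
      have hw' : w' = w := h
      rwa [hw']
  have hmem : ∃ c : Fin n → Fin (domChrom (pathArc n o)),
      IsDominatorColoring (pathArc n o) c := Nat.sInf_mem hne
  obtain ⟨c, hc⟩ := hmem
  by_cases hall : ∀ u v : Fin n, Src o u → Src o v → c u = c v
  · exact ⟨c, hc, fun u v hu hv => hall u v hu hv⟩
  push_neg at hall
  obtain ⟨s0, s1, hs0, hs1, hab⟩ := hall
  set a := c s0 with ha'
  set b := c s1 with hb'
  have hda : ¬ Dmd o c a := by
    rintro ⟨x, hx⟩
    exact hs0 x (hx.2 s0 rfl)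
  have hdb : ¬ Dmd o c b := by
    rintro ⟨x, hx⟩
    exact hs1 x (hx.2 s1 rfl)
  set c' : Fin n → Fin (domChrom (pathArc n o)) :=
    fun v => if Fr o c v then (if Gd o c v then a else b) else c v with hc'
  have hc'free : ∀ v, Fr o c v → c' v = if Gd o c v then a else b := by
    intro v hv; simp only [hc', if_pos hv]
  have hc'nonfree : ∀ v, ¬ Fr o c v → c' v = c v := by
    intro v hv; simp only [hc', if_neg hv]
  refine ⟨c', ⟨?_, ?_⟩, ?_⟩
  · -- properness
    intro u v harc heq
    by_cases hu : Fr o c u <;> by_cases hv : Fr o c v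
    · -- both free : use the parity flip
      rw [hc'free u hu, hc'free v hv] at heq
      rcases arc_nat harc with h1 | h1
      · have hflip := gd_flip hc hu hv h1
        by_cases gu : Gd o c u
        · have gv : ¬ Gd o c v := hflip.mp gu
          rw [if_pos gu, if_neg gv] at heq
          exact hab heq
        · have gv : Gd o c v := by
            by_contra gv
            exact gu (hflip.mpr gv)
          rw [if_neg gu, if_pos gv] at heq
          exact hab heq.symm
      · have hflip := gd_flip hc hv hu h1
        by_cases gv : Gd o c v
        · have gu : ¬ Gd o c u := hflip.mp gv
          rw [if_neg gu, if_pos gv] at heq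
          exact hab heq.symm
        · have gu : Gd o c u := by
            by_contra gu
            exact gv (hflip.mpr gu)
          rw [if_pos gu, if_neg gv] at heq
          exact hab heq
    · -- u free, v not
      have hdv : Dmd o c (c v) := by
        by_contra h
        exact hv h
      rw [hc'free u hu, hc'nonfree v hv] at heq
      by_cases gu : Gd o c u
      · rw [if_pos gu] at heq
        exact hda (heq ▸ hdv)
      · rw [if_neg gu] at heq
        exact hdb (heq ▸ hdv)
    · -- v free, u not
      have hdu : Dmd o c (c u) := by
        by_contra h
        exact hu h
      rw [hc'nonfree u hu, hc'free v hv] at heq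
      by_cases gv : Gd o c v
      · rw [if_pos gv] at heq
        exact hda (heq.symm ▸ hdu)
      · rw [if_neg gv] at heq
        exact hdb (heq.symm ▸ hdu)
    · -- both nonfree
      rw [hc'nonfree u hu, hc'nonfree v hv] at heq
      exact hc.1 u v harc heq
  · -- domination
    intro v hv
    obtain ⟨d, hd⟩ := hc.2 v hv
    obtain ⟨w0, hw0⟩ := hd.1
    have hfw0 : ¬ Fr o c w0 := by
      intro h
      exact h (by rw [hw0]; exact ⟨v, hd⟩)
    refine ⟨d, ⟨w0, ?_⟩, ?_⟩
    · rw [hc'nonfree w0 hfw0]; exact hw0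
    · intro w hw
      by_cases hfw : Fr o c w
      · exfalso
        rw [hc'free w hfw] at hw
        by_cases gw : Gd o c w
        · rw [if_pos gw] at hw
          exact hda (by rw [hw]; exact ⟨v, hd⟩)
        · rw [if_neg gw] at hw
          exact hdb (by rw [hw]; exact ⟨v, hd⟩)
      · rw [hc'nonfree w hfw] at hw
        exact hd.2 w hw
  · -- all sources get color a
    intro u v hu hv
    have fu : Fr o c u := src_fr hu
    have fv : Fr o c v := src_fr hv
    have hblku : Blk o c u u := by
      intro w hw
      have hwu : w = u := Fin.val_injective (by omega)
      rw [hwu]; exact fu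
    have hblkv : Blk o c v v := by
      intro w hw
      have hwv : w = v := Fin.val_injective (by omega)
      rw [hwv]; exact fv
    have gu : Gd o c u := Or.inl ⟨u, hu, hblku, rfl⟩
    have gv : Gd o c v := Or.inl ⟨v, hv, hblkv, rfl⟩
    rw [hc'free u fu, hc'free v fv, if_pos gu, if_pos gv]
end

section
/- For every real number M > 0 there exists a finite digraph D with at least one arc such that χ_d(D) > M · Δ(D), where Δ(D) denotes the maximum degree of D (the maximum over vertices of the sum of in-degree and out-degree). Consequently, the ratio χ_d(D)/Δ(D) is unbounded over all finite digraphs. -/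
def pA (k : ℕ) (u v : Fin (2*k)) : Bool :=
  decide ((u:ℕ) % 2 = 0 ∧ (v:ℕ) = (u:ℕ) + 1)

lemma pA_iff (k : ℕ) (u v : Fin (2*k)) :
    pA k u v = true ↔ ((u:ℕ) % 2 = 0 ∧ (v:ℕ) = (u:ℕ) + 1) := decide_eq_true_iff

noncomputable def myCol (k : ℕ) (v : Fin (2*k)) : Fin (k+1) :=
  if h : (v:ℕ) % 2 = 1 then ⟨(v:ℕ)/2, by have := v.isLt; omega⟩ else ⟨k, by omega⟩

lemma myCol_isDom (k : ℕ) :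
    IsDominatorColoring (fun u v : Fin (2*k) => pA k u v = true) (myCol k) := by
  constructor
  · intro u v huv
    simp only [pA_iff] at huv
    obtain ⟨hu, hv⟩ := huv
    simp only [myCol]
    rw [dif_neg (by omega), dif_pos (by omega)]
    intro h
    have := Fin.mk.injEq k _ ((v:ℕ)/2) _ ▸ h
    have hvu : (v:ℕ)/2 = k := by
      have := congrArg Fin.val h; simpa using this.symm
    have := v.isLt; omega
  · intro v ⟨w, hw⟩
    simp only [pA_iff] at hw
    obtain ⟨hv, hwv⟩ := hw
    have hwlt := w.isLt
    refine ⟨⟨((v:ℕ)+1)/2, by omega⟩, ⟨w, ?_⟩, ?_⟩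
    · simp only [myCol]; rw [dif_pos (by omega)]
      exact Fin.ext (by simp [hwv])
    · intro x hx
      simp only [myCol] at hx
      simp only [pA_iff]
      by_cases hxo : (x:ℕ) % 2 = 1
      · rw [dif_pos hxo] at hx
        have := congrArg Fin.val hx
        simp at this
        refine ⟨hv, ?_⟩
        omega
      · rw [dif_neg hxo] at hx
        have := congrArg Fin.val hx
        simp at this
        omega

lemma lower_bound_s14 (k : ℕ) (hk : 0 < k) (m : ℕ) (c : Fin (2*k) → Fin m)
    (hc : IsDominatorColoring (fun u v : Fin (2*k) => pA k u v = true) c) :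
    k + 1 ≤ m := by
  obtain ⟨hprop, hdom⟩ := hc
  have uniq : ∀ i : ℕ, (hi : i < k) → ∀ w : Fin (2*k),
      c w = c ⟨2*i+1, by omega⟩ → w = ⟨2*i+1, by omega⟩ := by
    intro i hi
    obtain ⟨a, ⟨w₀, hw₀⟩, hall⟩ := hdom ⟨2*i, by omega⟩
      ⟨⟨2*i+1, by omega⟩, by simp only [pA_iff]; constructor <;> simp⟩
    have key : ∀ w : Fin (2*k), c w = a → w = (⟨2*i+1, by omega⟩ : Fin (2*k)) := by
      intro w hw
      have h2 := hall w hw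
      simp only [pA_iff] at h2
      exact Fin.ext (by simpa using h2.2)
    have ha : a = c ⟨2*i+1, by omega⟩ := by rw [← hw₀, key w₀ hw₀]
    intro w hw
    exact key w (by rw [hw, ← ha])
  let f : Fin (k+1) → Fin m := fun i =>
    if h : (i:ℕ) < k then c ⟨2*(i:ℕ)+1, by omega⟩ else c ⟨0, by omega⟩
  have finj : Function.Injective f := by
    intro i j hij
    simp only [f] at hij
    by_cases hi : (i:ℕ) < k <;> by_cases hj : (j:ℕ) < k
    · rw [dif_pos hi, dif_pos hj] at hij
      have := uniq j hj _ hij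
      have := congrArg Fin.val this
      simp at this
      exact Fin.ext (by omega)
    · rw [dif_pos hi, dif_neg hj] at hij
      have := uniq i hi _ hij.symm
      have := congrArg Fin.val this
      simp at this
    · rw [dif_neg hi, dif_pos hj] at hij
      have := uniq j hj _ hij
      have := congrArg Fin.val this
      simp at this
    · have hi' := i.isLt; have hj' := j.isLt
      exact Fin.ext (by omega)
  have := Fintype.card_le_of_injective f finj
  simpa using this

lemma domChrom_pA (k : ℕ) (hk : 0 < k) :
    k + 1 ≤ domChrom (fun u v : Fin (2*k) => pA k u v = true) := by
  have hne : {m | ∃ c : Fin (2*k) → Fin m,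
      IsDominatorColoring (fun u v : Fin (2*k) => pA k u v = true) c}.Nonempty :=
    ⟨k+1, myCol k, myCol_isDom k⟩
  have hmem := Nat.sInf_mem hne
  obtain ⟨c, hc⟩ := hmem
  exact lower_bound_s14 k hk _ c hc

lemma sup_pA (k : ℕ) :
    (Finset.univ.sup fun v : Fin (2*k) =>
      (Finset.univ.filter fun w => pA k v w = true).card +
      (Finset.univ.filter fun w => pA k w v = true).card) ≤ 1 := by
  apply Finset.sup_le
  intro v _
  have hout : (Finset.univ.filter fun w => pA k v w = true).card ≤ 1 := by
    apply Finset.card_le_one.mpr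
    intro a ha b hb
    simp only [Finset.mem_filter, pA_iff] at ha hb
    exact Fin.ext (by omega)
  have hin : (Finset.univ.filter fun w => pA k w v = true).card ≤ 1 := by
    apply Finset.card_le_one.mpr
    intro a ha b hb
    simp only [Finset.mem_filter, pA_iff] at ha hb
    exact Fin.ext (by omega)
  by_cases hv : (v:ℕ) % 2 = 0
  · have : (Finset.univ.filter fun w => pA k w v = true) = ∅ := by
      apply Finset.filter_eq_empty_iff.mpr
      intro w _
      simp only [pA_iff]
      omega
    rw [this]
    simpa using hout
  · have : (Finset.univ.filter fun w => pA k v w = true) = ∅ := by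
      apply Finset.filter_eq_empty_iff.mpr
      intro w _
      simp only [pA_iff]
      omega
    rw [this]
    simpa using hin

theorem domChrom_over_maxDegree_unbounded :
    ∀ M : ℝ, 0 < M →
      ∃ (n : ℕ) (A : Fin n → Fin n → Bool),
        (∃ u v, A u v = true) ∧
        M * ((Finset.univ.sup fun v : Fin n =>
              (Finset.univ.filter fun w => A v w = true).card +
              (Finset.univ.filter fun w => A w v = true).card : ℕ) : ℝ) <
          (domChrom (fun u v : Fin n => A u v = true) : ℝ) := by
  intro M hM
  set k : ℕ := ⌈M⌉₊ + 1 with hkdef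
  have hk : 0 < k := by omega
  refine ⟨2*k, pA k, ⟨⟨0, by omega⟩, ⟨1, by omega⟩, ?_⟩, ?_⟩
  · rw [pA_iff]; constructor <;> simp
  · have h1 := domChrom_pA k hk
    have h2 := sup_pA k
    calc M * ((Finset.univ.sup fun v : Fin (2*k) =>
              (Finset.univ.filter fun w => pA k v w = true).card +
              (Finset.univ.filter fun w => pA k w v = true).card : ℕ) : ℝ)
        ≤ M * 1 := by
          apply mul_le_mul_of_nonneg_left _ hM.le
          exact_mod_cast h2
      _ = M := mul_one M
      _ < ((k + 1 : ℕ) : ℝ) := by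
          have : M ≤ (⌈M⌉₊ : ℝ) := Nat.le_ceil M
          push_cast
          have hk2 : (k:ℝ) = (⌈M⌉₊ : ℝ) + 1 := by rw [hkdef, Nat.cast_add, Nat.cast_one]
          linarith
      _ ≤ (domChrom (fun u v : Fin (2*k) => pA k u v = true) : ℝ) := by
          exact_mod_cast h1
end
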